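/- arXiv:2311.01748 — 2 statements merged into one kernel-verified Lean document; each statement's English description precedes it below -/
import Mathlib

section
/- Let 0 < α < 1 and z ≥ α. Let ρ₁, ρ₂, σ be n×n positive semidefinite complex matrices with ρ₁ ≤ ρ₂ in the Loewner order. Then Q_{α,z}(ρ₁‖σ) ≤ Q_{α,z}(ρ₂‖σ). -/
open Matrix
open scoped ComplexOrder

/-- Real power of a positive semidefinite matrix via the spectral decomposition,
applying `x ^ t` (real `rpow`, so with the convention `0 ^ t = 0` for `t ≠ 0`)
to the eigenvalues; returns `0` if the matrix is not Hermitian. -/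
noncomputable def mpow {n : Type*} [Fintype n] [DecidableEq n]
    (A : Matrix n n ℂ) (t : ℝ) : Matrix n n ℂ :=
  if hA : A.IsHermitian then
    (hA.eigenvectorUnitary : Matrix n n ℂ) *
      Matrix.diagonal (fun i => ((hA.eigenvalues i ^ t : ℝ) : ℂ)) *
      star (hA.eigenvectorUnitary : Matrix n n ℂ)
  else 0


/-- The α-z-Rényi quantity `Q_{α,z}(ρ‖σ) = Tr((σ^((1−α)/2z) ρ^(α/z) σ^((1−α)/2z))^z)`. -/
noncomputable def Qaz {n : Type*} [Fintype n] [DecidableEq n]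
    (α z : ℝ) (ρ σ : Matrix n n ℂ) : ℝ :=
  ((mpow (mpow σ ((1 - α) / (2 * z)) * mpow ρ (α / z) * mpow σ ((1 - α) / (2 * z))) z).trace).re


namespace QazAux

variable {n : Type*} [Fintype n] [DecidableEq n]
variable {A : Matrix n n ℂ}

lemma star_mul_self_eigU (hA : A.IsHermitian) :
    star (hA.eigenvectorUnitary : Matrix n n ℂ) * (hA.eigenvectorUnitary : Matrix n n ℂ) = 1 :=
  Unitary.star_mul_self_of_mem (SetLike.coe_mem _)

lemma mul_star_self_eigU (hA : A.IsHermitian) :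
    (hA.eigenvectorUnitary : Matrix n n ℂ) * star (hA.eigenvectorUnitary : Matrix n n ℂ) = 1 :=
  Unitary.mul_star_self_of_mem (SetLike.coe_mem _)

lemma cfc_def (hA : A.IsHermitian) (f : ℝ → ℝ) :
    hA.cfc f = (hA.eigenvectorUnitary : Matrix n n ℂ) *
      diagonal (fun i => ((f (hA.eigenvalues i) : ℝ) : ℂ)) *
      star (hA.eigenvectorUnitary : Matrix n n ℂ) := rfl

lemma mpow_eq (hA : A.IsHermitian) (t : ℝ) :
    mpow A t = hA.cfc (fun x => x ^ t) := by
  rw [mpow, dif_pos hA, cfc_def]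

lemma cfc_mul_cfc (hA : A.IsHermitian) (f g : ℝ → ℝ) :
    hA.cfc f * hA.cfc g = hA.cfc (fun x => f x * g x) := by
  rw [cfc_def, cfc_def, cfc_def]
  have key : ∀ X : Matrix n n ℂ, star (hA.eigenvectorUnitary : Matrix n n ℂ) *
      ((hA.eigenvectorUnitary : Matrix n n ℂ) * X) = X := fun X => by
    rw [← mul_assoc, star_mul_self_eigU, one_mul]
  simp only [mul_assoc]
  rw [key, ← mul_assoc (diagonal _) (diagonal _), diagonal_mul_diagonal]
  simp [Complex.ofReal_mul]

lemma cfc_one (hA : A.IsHermitian) : hA.cfc (fun _ => 1) = 1 := by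
  rw [cfc_def]
  simp only [Complex.ofReal_one, diagonal_one, mul_one]
  exact mul_star_self_eigU hA

lemma cfc_sub (hA : A.IsHermitian) (f g : ℝ → ℝ) :
    hA.cfc f - hA.cfc g = hA.cfc (fun x => f x - g x) := by
  rw [cfc_def, cfc_def, cfc_def, ← sub_mul, ← mul_sub, diagonal_sub]
  push_cast
  rfl

lemma cfc_id' (hA : A.IsHermitian) : hA.cfc (fun x => x) = A := by
  rw [cfc_def]
  exact (hA.spectral_theorem).symm

lemma cfc_conjTranspose (hA : A.IsHermitian) (f : ℝ → ℝ) : (hA.cfc f)ᴴ = hA.cfc f := by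
  rw [cfc_def, ← star_eq_conjTranspose]
  simp only [StarMul.star_mul, star_star, star_eq_conjTranspose (diagonal _), diagonal_conjTranspose]
  rw [mul_assoc]
  congr! 2
  ext i
  simp [Pi.star_def]

lemma cfc_isHermitian (hA : A.IsHermitian) (f : ℝ → ℝ) : (hA.cfc f).IsHermitian :=
  cfc_conjTranspose hA f

lemma star_dot_self (v : n → ℂ) :
    star v ⬝ᵥ v = ((∑ i, Complex.normSq (v i) : ℝ) : ℂ) := by
  simp only [dotProduct, Pi.star_apply, RCLike.star_def]
  push_cast
  refine Finset.sum_congr rfl fun i _ => ?_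
  rw [Complex.normSq_eq_conj_mul_self]

lemma cfc_form (hA : A.IsHermitian) (f : ℝ → ℝ) (x : n → ℂ) :
    star x ⬝ᵥ (hA.cfc f *ᵥ x) =
      ((∑ i, f (hA.eigenvalues i) *
        Complex.normSq ((star (hA.eigenvectorUnitary : Matrix n n ℂ) *ᵥ x) i) : ℝ) : ℂ) := by
  set U := (hA.eigenvectorUnitary : Matrix n n ℂ) with hU
  set y := star U *ᵥ x with hy
  have hsy : star x ᵥ* U = star y := by
    simp [hy, star_mulVec, star_eq_conjTranspose]
  rw [cfc_def, mul_assoc, ← mulVec_mulVec, dotProduct_mulVec, hsy, ← mulVec_mulVec, ← hy]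
  simp only [mulVec_diagonal, dotProduct, Pi.star_apply, RCLike.star_def]
  push_cast
  refine Finset.sum_congr rfl fun i _ => ?_
  rw [Complex.normSq_eq_conj_mul_self]
  ring

lemma cfc_trace (hA : A.IsHermitian) (f : ℝ → ℝ) :
    (hA.cfc f).trace = ((∑ i, f (hA.eigenvalues i) : ℝ) : ℂ) := by
  rw [cfc_def, trace_mul_cycle, star_mul_self_eigU, one_mul, trace_diagonal]
  push_cast
  rfl

lemma cfc_posSemidef (hA : A.IsHermitian) (f : ℝ → ℝ)
    (hf : ∀ i, 0 ≤ f (hA.eigenvalues i)) : (hA.cfc f).PosSemidef := by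
  refine PosSemidef.of_dotProduct_mulVec_nonneg (cfc_isHermitian hA f) fun x => ?_
  rw [cfc_form]
  rw [Complex.zero_le_real]
  exact Finset.sum_nonneg fun i _ => mul_nonneg (hf i) (Complex.normSq_nonneg _)

lemma basis_dot_self (hA : A.IsHermitian) (j : n) :
    star (⇑(hA.eigenvectorBasis j) : n → ℂ) ⬝ᵥ ⇑(hA.eigenvectorBasis j) = 1 := by
  have h := congrFun (congrFun (star_mul_self_eigU hA) j) j
  rw [mul_apply, one_apply_eq] at h
  rw [← h, dotProduct]
  refine Finset.sum_congr rfl fun k _ => ?_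
  simp only [Matrix.star_apply, Matrix.IsHermitian.eigenvectorUnitary_apply, Pi.star_apply]

lemma le_one_of_psd_one_sub {H : Matrix n n ℂ} (h1 : ((1 : Matrix n n ℂ) - H).PosSemidef)
    {μ : ℝ} {v : n → ℂ} (hv : H *ᵥ v = (μ : ℂ) • v) (hS : star v ⬝ᵥ v ≠ 0) : μ ≤ 1 := by
  have h := h1.dotProduct_mulVec_nonneg v
  rw [sub_mulVec, one_mulVec, dotProduct_sub, hv, dotProduct_smul, smul_eq_mul,
    star_dot_self] at h
  have hc : (0 : ℂ) ≤ (((∑ i, Complex.normSq (v i)) - μ * (∑ i, Complex.normSq (v i)) : ℝ) : ℂ) := by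
    convert h using 1
    push_cast
    ring
  rw [Complex.zero_le_real] at hc
  have hS0 : 0 < ∑ i, Complex.normSq (v i) := by
    rcases (Finset.sum_nonneg fun i (_ : i ∈ Finset.univ) => Complex.normSq_nonneg (v i)).lt_or_eq with h' | h'
    · exact h'
    · exact absurd (by rw [star_dot_self, ← h', Complex.ofReal_zero]) hS
  nlinarith

lemma psd_one_sub_of_eig_le {H : Matrix n n ℂ} (hH : H.PosSemidef)
    (h : ∀ j, hH.1.eigenvalues j ≤ 1) : ((1 : Matrix n n ℂ) - H).PosSemidef := by
  have e1 : (1 : Matrix n n ℂ) - H = hH.1.cfc (fun _ => 1) - hH.1.cfc (fun x => x) := by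
    rw [cfc_one, cfc_id']
  rw [e1, cfc_sub]
  exact cfc_posSemidef _ _ fun i => sub_nonneg.mpr (h i)

lemma eig_le_of_psd_one_sub {H : Matrix n n ℂ} (hH : H.PosSemidef)
    (h : ((1 : Matrix n n ℂ) - H).PosSemidef) (j : n) : hH.1.eigenvalues j ≤ 1 := by
  refine le_one_of_psd_one_sub h ?_ ?_ (v := ⇑(hH.1.eigenvectorBasis j))
  · have := hH.1.mulVec_eigenvectorBasis j
    rw [this]
    ext i
    simp [Complex.real_smul]
  · rw [basis_dot_self]
    exact one_ne_zero

lemma star_dot_self_eq_zero {v : n → ℂ} : star v ⬝ᵥ v = 0 ↔ v = 0 := by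
  rw [star_dot_self]
  norm_cast
  rw [Finset.sum_eq_zero_iff_of_nonneg fun i _ => Complex.normSq_nonneg (v i)]
  constructor
  · intro h
    funext i
    exact Complex.normSq_eq_zero.mp (h i (Finset.mem_univ i))
  · rintro rfl i _
    simp

lemma sum_normSq_pos {v : n → ℂ} (hv : v ≠ 0) : 0 < ∑ i, Complex.normSq (v i) := by
  rcases (Finset.sum_nonneg fun i (_ : i ∈ Finset.univ) =>
    Complex.normSq_nonneg (v i)).lt_or_eq with h | h
  · exact h
  · exfalso
    exact hv (star_dot_self_eq_zero.mp (by rw [star_dot_self, ← h, Complex.ofReal_zero]))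

lemma dot_re_le (s t : n → ℂ) :
    (star s ⬝ᵥ t).re ≤
      Real.sqrt (∑ i, Complex.normSq (s i)) * Real.sqrt (∑ i, Complex.normSq (t i)) := by
  have h1 : (star s ⬝ᵥ t).re ≤ ∑ i, ‖s i‖ * ‖t i‖ := by
    rw [dotProduct, Complex.re_sum]
    refine Finset.sum_le_sum fun i _ => ?_
    calc (star s i * t i).re ≤ ‖star s i * t i‖ := Complex.re_le_norm _
      _ = ‖s i‖ * ‖t i‖ := by
          simp [_root_.map_mul, Pi.star_apply, RCLike.star_def]
  refine h1.trans ?_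
  have h2 := Real.sum_mul_le_sqrt_mul_sqrt Finset.univ
    (fun i => ‖s i‖) (fun i => ‖t i‖)
  simpa only [Complex.sq_norm] using h2

/-- `Con M` means `M` is a contraction: `Mᴴ M ≤ 1`. -/
def Con (M : Matrix n n ℂ) : Prop := ((1 : Matrix n n ℂ) - Mᴴ * M).PosSemidef

lemma dot_conjTranspose_mulVec (M : Matrix n n ℂ) (x w : n → ℂ) :
    star x ⬝ᵥ (Mᴴ *ᵥ w) = star (M *ᵥ x) ⬝ᵥ w := by
  rw [dotProduct_mulVec, star_mulVec]

lemma con_one : Con (1 : Matrix n n ℂ) := by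
  unfold Con
  simp only [conjTranspose_one, mul_one, sub_self]
  exact Matrix.PosSemidef.zero

lemma con_quadratic {M : Matrix n n ℂ} (h : Con M) (x : n → ℂ) :
    ∑ i, Complex.normSq ((M *ᵥ x) i) ≤ ∑ i, Complex.normSq (x i) := by
  have h2 := PosSemidef.dotProduct_mulVec_nonneg h x
  rw [sub_mulVec, one_mulVec, dotProduct_sub, ← mulVec_mulVec, dot_conjTranspose_mulVec,
    star_dot_self, star_dot_self, ← Complex.ofReal_sub, Complex.zero_le_real] at h2
  linarith

lemma eig_mulVec {H : Matrix n n ℂ} (hH : H.IsHermitian) (j : n) :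
    H *ᵥ ⇑(hH.eigenvectorBasis j) = ((hH.eigenvalues j : ℝ) : ℂ) • ⇑(hH.eigenvectorBasis j) := by
  rw [hH.mulVec_eigenvectorBasis]
  ext i
  simp [Complex.real_smul]

lemma basis_ne_zero (hH : IsHermitian A) (j : n) : (⇑(hH.eigenvectorBasis j) : n → ℂ) ≠ 0 :=
  fun h => one_ne_zero (α := ℂ) (by rw [← basis_dot_self hH j, h]; simp)

lemma con_conjTranspose {M : Matrix n n ℂ} (h : Con M) : Con Mᴴ := by
  have hH : (M * Mᴴ).PosSemidef := posSemidef_self_mul_conjTranspose M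
  unfold Con
  rw [conjTranspose_conjTranspose]
  refine psd_one_sub_of_eig_le hH fun j => ?_
  set μ := hH.1.eigenvalues j with hμdef
  set v := (⇑(hH.1.eigenvectorBasis j) : n → ℂ) with hvdef
  have hveig : (M * Mᴴ) *ᵥ v = ((μ : ℝ) : ℂ) • v := eig_mulVec hH.1 j
  by_cases hu : Mᴴ *ᵥ v = 0
  · have h0 : ((μ : ℝ) : ℂ) • v = 0 := by
      rw [← hveig, ← mulVec_mulVec, hu, mulVec_zero]
    rcases smul_eq_zero.mp h0 with h' | h'
    · rw [show μ = 0 from by exact_mod_cast h']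
      norm_num
    · exact absurd h' (basis_ne_zero hH.1 j)
  · have hueig : (Mᴴ * M) *ᵥ (Mᴴ *ᵥ v) = ((μ : ℝ) : ℂ) • (Mᴴ *ᵥ v) := by
      rw [mulVec_mulVec, mul_assoc, ← mulVec_mulVec, hveig, mulVec_smul]
    refine le_one_of_psd_one_sub h hueig ?_
    rw [Ne, star_dot_self_eq_zero]
    exact hu

lemma cfc_congr' (hA : A.IsHermitian) {f g : ℝ → ℝ}
    (h : ∀ i, f (hA.eigenvalues i) = g (hA.eigenvalues i)) : hA.cfc f = hA.cfc g := by
  have e : (fun i => ((f (hA.eigenvalues i) : ℝ) : ℂ)) =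
      fun i => ((g (hA.eigenvalues i) : ℝ) : ℂ) := funext fun i => by rw [h i]
  rw [cfc_def, cfc_def, e]

lemma mpow_isHermitian (A : Matrix n n ℂ) (t : ℝ) : (mpow A t).IsHermitian := by
  by_cases hA : A.IsHermitian
  · rw [mpow_eq hA]; exact cfc_isHermitian hA _
  · rw [mpow, dif_neg hA]; exact isHermitian_zero

lemma mpow_conjTranspose (A : Matrix n n ℂ) (t : ℝ) : (mpow A t)ᴴ = mpow A t :=
  mpow_isHermitian A t

lemma mpow_zero (hA : A.IsHermitian) : mpow A 0 = 1 := by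
  rw [mpow_eq hA, cfc_congr' hA (g := fun _ => 1) fun i => Real.rpow_zero _, cfc_one]

lemma mpow_one (hA : A.IsHermitian) : mpow A 1 = A := by
  rw [mpow_eq hA, cfc_congr' hA (g := fun x => x) fun i => Real.rpow_one _, cfc_id']

lemma mpow_posSemidef {a : Matrix n n ℂ} (ha : a.PosSemidef) (t : ℝ) :
    (mpow a t).PosSemidef := by
  rw [mpow_eq ha.1]
  exact cfc_posSemidef _ _ fun i => Real.rpow_nonneg (ha.eigenvalues_nonneg i) t

lemma mpow_add_pd {b : Matrix n n ℂ} (hb : b.PosDef) (s t : ℝ) :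
    mpow b s * mpow b t = mpow b (s + t) := by
  rw [mpow_eq hb.1, mpow_eq hb.1, mpow_eq hb.1, cfc_mul_cfc]
  exact cfc_congr' hb.1 fun i => (Real.rpow_add (hb.eigenvalues_pos i) s t).symm

lemma mpow_add_psd {a : Matrix n n ℂ} (ha : a.PosSemidef) {s t : ℝ} (hs : 0 ≤ s) (ht : 0 ≤ t)
    (hst : 0 < s + t) : mpow a s * mpow a t = mpow a (s + t) := by
  rw [mpow_eq ha.1, mpow_eq ha.1, mpow_eq ha.1, cfc_mul_cfc]
  exact cfc_congr' ha.1 fun i =>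
    (Real.rpow_add' (ha.eigenvalues_nonneg i) hst.ne').symm

/-- Characterization: `a^u ≤ b^u` iff `a^(u/2) b^(-u/2)` is a contraction. -/
lemma claimA {a b : Matrix n n ℂ} (ha : a.PosSemidef) (hb : b.PosDef) {u : ℝ} (hu : 0 < u) :
    (mpow b u - mpow a u).PosSemidef ↔ Con (mpow a (u / 2) * mpow b (-(u / 2))) := by
  have hp : 0 < u / 2 := by linarith
  have hMH : (mpow a (u / 2) * mpow b (-(u / 2)))ᴴ = mpow b (-(u / 2)) * mpow a (u / 2) := by
    rw [conjTranspose_mul, mpow_conjTranspose, mpow_conjTranspose]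
  have haa : mpow a (u / 2) * mpow a (u / 2) = mpow a u := by
    rw [mpow_add_psd ha hp.le hp.le (by linarith)]
    exact congrArg (mpow a) (by ring)
  have hbneg : mpow b (-(u / 2)) * mpow b (-(u / 2)) = mpow b (-u) := by
    rw [mpow_add_pd hb]
    exact congrArg (mpow b) (by ring)
  have hbb0 : mpow b (-(u / 2)) * mpow b (u / 2) = 1 := by
    rw [mpow_add_pd hb, show -(u / 2) + u / 2 = (0 : ℝ) by ring, mpow_zero hb.1]
  have hbb0' : mpow b (u / 2) * mpow b (-(u / 2)) = 1 := by
    rw [mpow_add_pd hb, show u / 2 + -(u / 2) = (0 : ℝ) by ring, mpow_zero hb.1]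
  have hbub : mpow b (-(u / 2)) * mpow b u * mpow b (-(u / 2)) = 1 := by
    rw [mpow_add_pd hb, show -(u / 2) + u = u / 2 by ring, hbb0']
  have hMM : (mpow a (u / 2) * mpow b (-(u / 2)))ᴴ * (mpow a (u / 2) * mpow b (-(u / 2)))
      = mpow b (-(u / 2)) * mpow a u * mpow b (-(u / 2)) := by
    rw [hMH]
    calc mpow b (-(u / 2)) * mpow a (u / 2) * (mpow a (u / 2) * mpow b (-(u / 2)))
        = mpow b (-(u / 2)) * (mpow a (u / 2) * mpow a (u / 2)) * mpow b (-(u / 2)) := by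
          noncomm_ring
      _ = mpow b (-(u / 2)) * mpow a u * mpow b (-(u / 2)) := by rw [haa]
  constructor
  · intro h
    unfold Con
    rw [hMM]
    have key : (1 : Matrix n n ℂ) - mpow b (-(u / 2)) * mpow a u * mpow b (-(u / 2))
        = (mpow b (-(u / 2)))ᴴ * (mpow b u - mpow a u) * mpow b (-(u / 2)) := by
      rw [mpow_conjTranspose, mul_sub, sub_mul, hbub]
    rw [key]
    exact h.conjTranspose_mul_mul_same _
  · intro h
    have key : mpow b u - mpow a u
        = (mpow b (u / 2))ᴴ *
            ((1 : Matrix n n ℂ) - mpow b (-(u / 2)) * mpow a u * mpow b (-(u / 2))) *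
            mpow b (u / 2) := by
      rw [mpow_conjTranspose, mul_sub, sub_mul, mul_one]
      rw [show mpow b (u / 2) * (mpow b (-(u / 2)) * mpow a u * mpow b (-(u / 2)))
            * mpow b (u / 2)
          = (mpow b (u / 2) * mpow b (-(u / 2))) * mpow a u
            * (mpow b (-(u / 2)) * mpow b (u / 2)) from by noncomm_ring]
      rw [hbb0', hbb0, one_mul, mul_one]
      rw [mpow_add_pd hb, show u / 2 + u / 2 = u by ring]
    rw [key]
    unfold Con at h
    rw [hMM] at h
    exact h.conjTranspose_mul_mul_same _

lemma claimB {a b : Matrix n n ℂ} (ha : a.PosSemidef) (hb : b.PosDef) {p q : ℝ}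
    (hp : 0 ≤ p) (hq : 0 ≤ q) (hpq : 0 < p + q)
    (hP : Con (mpow a p * mpow b (-p))) (hQ : Con (mpow a q * mpow b (-q))) :
    Con (mpow a ((p + q) / 2) * mpow b (-((p + q) / 2))) := by
  set r : ℝ := (p + q) / 2 with hrdef
  have hr : 0 < r := by rw [hrdef]; linarith
  set M : Matrix n n ℂ := mpow a r * mpow b (-r) with hMdef
  have hMH : Mᴴ = mpow b (-r) * mpow a r := by
    rw [hMdef, conjTranspose_mul, mpow_conjTranspose, mpow_conjTranspose]
  have hH : (Mᴴ * M).PosSemidef := posSemidef_conjTranspose_mul_self M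
  have hbq : mpow b (-q) * mpow b (-p) = mpow b (-r) * mpow b (-r) := by
    rw [mpow_add_pd hb, mpow_add_pd hb]
    exact congrArg (mpow b) (by rw [hrdef]; ring)
  have hap : mpow a p * mpow a q = mpow a r * mpow a r := by
    rw [mpow_add_psd ha hp hq hpq, mpow_add_psd ha hr.le hr.le (by linarith)]
    exact congrArg (mpow a) (by rw [hrdef]; ring)
  set X : Matrix n n ℂ := mpow a q * mpow b (-q) with hXdef
  set Y : Matrix n n ℂ := mpow b (-p) * mpow a p with hYdef
  set C : Matrix n n ℂ := mpow a q * mpow b (-r) with hCdef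
  have key : X * Y * C = C * (Mᴴ * M) := by
    rw [hXdef, hYdef, hCdef, hMdef, hMH]
    calc mpow a q * mpow b (-q) * (mpow b (-p) * mpow a p) * (mpow a q * mpow b (-r))
        = mpow a q * ((mpow b (-q) * mpow b (-p)) * (mpow a p * mpow a q)) * mpow b (-r) := by
          noncomm_ring
      _ = mpow a q * ((mpow b (-r) * mpow b (-r)) * (mpow a r * mpow a r)) * mpow b (-r) := by
          rw [hbq, hap]
      _ = mpow a q * mpow b (-r) * (mpow b (-r) * mpow a r * (mpow a r * mpow b (-r))) := by
          noncomm_ring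
  have key2 : Mᴴ * M = (mpow b (-r) * mpow a p) * C := by
    rw [hMH, hMdef, hCdef]
    calc mpow b (-r) * mpow a r * (mpow a r * mpow b (-r))
        = mpow b (-r) * (mpow a r * mpow a r) * mpow b (-r) := by noncomm_ring
      _ = mpow b (-r) * (mpow a p * mpow a q) * mpow b (-r) := by rw [← hap]
      _ = mpow b (-r) * mpow a p * (mpow a q * mpow b (-r)) := by noncomm_ring
  refine psd_one_sub_of_eig_le hH fun j => ?_
  set μ := hH.1.eigenvalues j with hμdef
  set v := (⇑(hH.1.eigenvectorBasis j) : n → ℂ) with hvdef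
  have hveig : (Mᴴ * M) *ᵥ v = ((μ : ℝ) : ℂ) • v := eig_mulVec hH.1 j
  set u : n → ℂ := C *ᵥ v with hudef
  by_cases hu0 : u = 0
  · have h0 : ((μ : ℝ) : ℂ) • v = 0 := by
      rw [← hveig, key2, ← mulVec_mulVec, ← hudef, hu0, mulVec_zero]
    rcases smul_eq_zero.mp h0 with h' | h'
    · rw [show μ = 0 from by exact_mod_cast h']
      norm_num
    · exact absurd h' (basis_ne_zero hH.1 j)
  · have hueig : (X * Y) *ᵥ u = ((μ : ℝ) : ℂ) • u := by
      rw [hudef, mulVec_mulVec, key, ← mulVec_mulVec, hveig, mulVec_smul]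
    have hSu : 0 < ∑ i, Complex.normSq (u i) := sum_normSq_pos hu0
    have hdot : star u ⬝ᵥ ((X * Y) *ᵥ u)
        = (((μ * ∑ i, Complex.normSq (u i) : ℝ)) : ℂ) := by
      rw [hueig, dotProduct_smul, smul_eq_mul, star_dot_self, ← Complex.ofReal_mul]
    have hdot2 : star u ⬝ᵥ ((X * Y) *ᵥ u) = star (Xᴴ *ᵥ u) ⬝ᵥ (Y *ᵥ u) := by
      rw [← mulVec_mulVec]
      conv_lhs => rw [show X = (Xᴴ)ᴴ from (conjTranspose_conjTranspose X).symm]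
      rw [dot_conjTranspose_mulVec]
    have hXu : ∑ i, Complex.normSq ((Xᴴ *ᵥ u) i) ≤ ∑ i, Complex.normSq (u i) :=
      con_quadratic (con_conjTranspose hQ) u
    have hYcon : Con Y := by
      rw [show Y = (mpow a p * mpow b (-p))ᴴ from by
        rw [hYdef, conjTranspose_mul, mpow_conjTranspose, mpow_conjTranspose]]
      exact con_conjTranspose hP
    have hYu : ∑ i, Complex.normSq ((Y *ᵥ u) i) ≤ ∑ i, Complex.normSq (u i) :=
      con_quadratic hYcon u
    have hre : μ * (∑ i, Complex.normSq (u i)) ≤ ∑ i, Complex.normSq (u i) := by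
      calc μ * (∑ i, Complex.normSq (u i))
          = (star (Xᴴ *ᵥ u) ⬝ᵥ (Y *ᵥ u)).re := by
            rw [← hdot2, hdot, Complex.ofReal_re]
        _ ≤ Real.sqrt (∑ i, Complex.normSq ((Xᴴ *ᵥ u) i)) *
              Real.sqrt (∑ i, Complex.normSq ((Y *ᵥ u) i)) := dot_re_le _ _
        _ ≤ Real.sqrt (∑ i, Complex.normSq (u i)) *
              Real.sqrt (∑ i, Complex.normSq (u i)) :=
            mul_le_mul (Real.sqrt_le_sqrt hXu) (Real.sqrt_le_sqrt hYu)
              (Real.sqrt_nonneg _) (Real.sqrt_nonneg _)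
        _ = ∑ i, Complex.normSq (u i) := Real.mul_self_sqrt hSu.le
    nlinarith

lemma cfc_add (hA : A.IsHermitian) (f g : ℝ → ℝ) :
    hA.cfc f + hA.cfc g = hA.cfc (fun x => f x + g x) := by
  rw [cfc_def, cfc_def, cfc_def, ← add_mul, ← mul_add, diagonal_add]
  push_cast
  rfl

lemma smul_one_eq_diagonal (c : ℝ) :
    (c : ℂ) • (1 : Matrix n n ℂ) = diagonal (fun _ => (c : ℂ)) := by
  ext i k
  by_cases h : i = k <;> simp [diagonal, h, Matrix.one_apply]

lemma cfc_const (hA : A.IsHermitian) (c : ℝ) :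
    hA.cfc (fun _ => c) = (c : ℂ) • (1 : Matrix n n ℂ) := by
  rw [cfc_def, ← smul_one_eq_diagonal c, mul_smul_comm, smul_mul_assoc, mul_one,
    mul_star_self_eigU]

lemma add_smul_one_eq_cfc (hA : A.IsHermitian) (c : ℝ) :
    A + (c : ℂ) • (1 : Matrix n n ℂ) = hA.cfc (fun x => x + c) := by
  conv_lhs => rw [← cfc_id' hA, ← cfc_const hA c]
  rw [cfc_add]

lemma continuous_rpow_const {t : ℝ} (ht : 0 < t) : Continuous fun x : ℝ => x ^ t :=
  continuous_iff_continuousAt.mpr fun x => Real.continuousAt_rpow_const x t (Or.inr ht.le)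

lemma mpow_shift {B : Matrix n n ℂ} (hB : B.IsHermitian) (c : ℝ) {t : ℝ} (ht : 0 < t) :
    mpow (B + (c : ℂ) • (1 : Matrix n n ℂ)) t = hB.cfc (fun x => (x + c) ^ t) := by
  have h1 : B + (c : ℂ) • (1 : Matrix n n ℂ) = cfc (fun x : ℝ => x + c) B := by
    rw [Matrix.IsHermitian.cfc_eq hB]
    exact add_smul_one_eq_cfc hB c
  have h2 : (B + (c : ℂ) • (1 : Matrix n n ℂ)).IsHermitian := by
    rw [h1, Matrix.IsHermitian.cfc_eq hB]
    exact cfc_isHermitian hB _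
  have h3 : cfc ((fun x : ℝ => x ^ t) ∘ (fun x : ℝ => x + c)) B
      = cfc (fun x : ℝ => x ^ t) (cfc (fun x : ℝ => x + c) B) :=
    cfc_comp _ _ B hB ((continuous_rpow_const ht).continuousOn)
      ((continuous_id.add continuous_const).continuousOn)
  rw [mpow_eq h2, ← Matrix.IsHermitian.cfc_eq h2, h1, ← h3,
    Matrix.IsHermitian.cfc_eq hB]
  rfl

lemma psd_of_tendsto {A B : Matrix n n ℂ} (hA : A.IsHermitian) (hB : B.IsHermitian)
    (F G : ℕ → ℝ → ℝ) (f g : ℝ → ℝ)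
    (h : ∀ m, (hB.cfc (G m) - hA.cfc (F m)).PosSemidef)
    (hFa : ∀ i, Filter.Tendsto (fun m => F m (hA.eigenvalues i)) Filter.atTop
      (nhds (f (hA.eigenvalues i))))
    (hGb : ∀ i, Filter.Tendsto (fun m => G m (hB.eigenvalues i)) Filter.atTop
      (nhds (g (hB.eigenvalues i)))) :
    (hB.cfc g - hA.cfc f).PosSemidef := by
  refine PosSemidef.of_dotProduct_mulVec_nonneg ((cfc_isHermitian hB g).sub (cfc_isHermitian hA f)) fun x => ?_
  rw [sub_mulVec, dotProduct_sub, cfc_form, cfc_form, ← Complex.ofReal_sub,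
    Complex.zero_le_real]
  refine ge_of_tendsto' (x := Filter.atTop)
    (f := fun m => (∑ i, G m (hB.eigenvalues i) *
        Complex.normSq ((star (hB.eigenvectorUnitary : Matrix n n ℂ) *ᵥ x) i)) -
      ∑ i, F m (hA.eigenvalues i) *
        Complex.normSq ((star (hA.eigenvectorUnitary : Matrix n n ℂ) *ᵥ x) i)) ?_ fun m => ?_
  · exact Filter.Tendsto.sub
      (tendsto_finset_sum _ fun i _ => (hGb i).mul_const _)
      (tendsto_finset_sum _ fun i _ => (hFa i).mul_const _)
  · have h2 := (h m).dotProduct_mulVec_nonneg x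
    rw [sub_mulVec, dotProduct_sub, cfc_form, cfc_form, ← Complex.ofReal_sub,
      Complex.zero_le_real] at h2
    exact h2

lemma con_zero_exp {a b : Matrix n n ℂ} (ha : a.IsHermitian) (hb : b.IsHermitian) :
    Con (mpow a 0 * mpow b (-0)) := by
  rw [neg_zero, mpow_zero ha, mpow_zero hb, one_mul]
  exact con_one

lemma lh_midpoint {a b : Matrix n n ℂ} (ha : a.PosSemidef) (hb : b.PosDef) {u v : ℝ}
    (hu : 0 ≤ u) (hv : 0 ≤ v)
    (hPu : (mpow b u - mpow a u).PosSemidef) (hPv : (mpow b v - mpow a v).PosSemidef) :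
    (mpow b ((u + v) / 2) - mpow a ((u + v) / 2)).PosSemidef := by
  rcases eq_or_lt_of_le (by linarith : (0 : ℝ) ≤ u + v) with h0 | h0
  · rw [show (u + v) / 2 = 0 by rw [← h0]; ring, mpow_zero ha.1, mpow_zero hb.1, sub_self]
    exact Matrix.PosSemidef.zero
  · have hCu : Con (mpow a (u / 2) * mpow b (-(u / 2))) := by
      rcases eq_or_lt_of_le hu with h | h
      · rw [show u / 2 = 0 by rw [← h]; ring]
        exact con_zero_exp ha.1 hb.1
      · exact (claimA ha hb h).mp hPu
    have hCv : Con (mpow a (v / 2) * mpow b (-(v / 2))) := by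
      rcases eq_or_lt_of_le hv with h | h
      · rw [show v / 2 = 0 by rw [← h]; ring]
        exact con_zero_exp ha.1 hb.1
      · exact (claimA ha hb h).mp hPv
    have hmid := claimB ha hb (by linarith : (0:ℝ) ≤ u / 2) (by linarith : (0:ℝ) ≤ v / 2)
      (by linarith) hCu hCv
    rw [show (u / 2 + v / 2) / 2 = ((u + v) / 2) / 2 by ring] at hmid
    exact (claimA ha hb (by linarith)).mpr hmid

lemma lh_dyadic {a b : Matrix n n ℂ} (ha : a.PosSemidef) (hb : b.PosDef)
    (hab : (b - a).PosSemidef) :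
    ∀ m k : ℕ, k ≤ 2 ^ m →
      (mpow b ((k : ℝ) / 2 ^ m) - mpow a ((k : ℝ) / 2 ^ m)).PosSemidef := by
  intro m
  induction m with
  | zero =>
    intro k hk
    interval_cases k
    · rw [show ((0 : ℕ) : ℝ) / 2 ^ (0 : ℕ) = 0 by norm_num, mpow_zero ha.1, mpow_zero hb.1,
        sub_self]
      exact Matrix.PosSemidef.zero
    · rw [show ((1 : ℕ) : ℝ) / 2 ^ (0 : ℕ) = 1 by norm_num, mpow_one ha.1, mpow_one hb.1]
      exact hab
  | succ m ih =>
    intro k hk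
    rcases Nat.even_or_odd k with ⟨j, hj⟩ | ⟨j, hj⟩
    · have hj2 : j ≤ 2 ^ m := by
        subst hj
        rw [pow_succ] at hk
        omega
      have harg : ((k : ℝ) / 2 ^ (m + 1)) = (j : ℝ) / 2 ^ m := by
        subst hj
        push_cast
        field_simp
        ring
      rw [harg]
      exact ih j hj2
    · have hj2 : j + 1 ≤ 2 ^ m := by
        subst hj
        rw [pow_succ] at hk
        omega
      have harg : ((k : ℝ) / 2 ^ (m + 1)) = ((j : ℝ) / 2 ^ m + ((j + 1 : ℕ) : ℝ) / 2 ^ m) / 2 := by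
        subst hj
        push_cast
        field_simp
        ring
      rw [harg]
      exact lh_midpoint ha hb (by positivity) (by positivity)
        (ih j (by omega)) (ih (j + 1) hj2)

lemma rpow_exp_tendsto {lam t : ℝ} (hlam : 0 ≤ lam) (ht : 0 < t) {c : ℕ → ℝ}
    (hc : ∀ m, 0 < c m) (h : Filter.Tendsto c Filter.atTop (nhds t)) :
    Filter.Tendsto (fun m => lam ^ c m) Filter.atTop (nhds (lam ^ t)) := by
  rcases hlam.lt_or_eq with hpos | hzero
  · have : (fun m => lam ^ c m) = fun m => Real.exp (Real.log lam * c m) := by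
      funext m
      rw [Real.rpow_def_of_pos hpos]
    rw [this, Real.rpow_def_of_pos hpos]
    exact (Real.continuous_exp.tendsto _).comp (h.const_mul _)
  · have : (fun m => lam ^ c m) = fun _ => (0 : ℝ) := by
      funext m
      rw [← hzero, Real.zero_rpow (hc m).ne']
    rw [this, ← hzero, Real.zero_rpow ht.ne']
    exact tendsto_const_nhds

lemma lh_pd {a b : Matrix n n ℂ} (ha : a.PosSemidef) (hb : b.PosDef)
    (hab : (b - a).PosSemidef) {t : ℝ} (ht : 0 < t) (ht1 : t ≤ 1) :
    (mpow b t - mpow a t).PosSemidef := by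
  set c : ℕ → ℝ := fun m => ((⌈t * 2 ^ m⌉₊ : ℕ) : ℝ) / 2 ^ m with hcdef
  have h2m : ∀ m : ℕ, (0 : ℝ) < 2 ^ m := fun m => by positivity
  have hck : ∀ m : ℕ, ⌈t * 2 ^ m⌉₊ ≤ 2 ^ m := by
    intro m
    rw [Nat.ceil_le]
    push_cast
    nlinarith [h2m m]
  have hcpos : ∀ m, 0 < c m := by
    intro m
    rw [hcdef]
    have : 0 < ⌈t * 2 ^ m⌉₊ := Nat.ceil_pos.mpr (by positivity)
    positivity
  have hcge : ∀ m, t ≤ c m := by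
    intro m
    rw [hcdef]
    rw [le_div_iff₀ (h2m m)]
    exact Nat.le_ceil _
  have hcle : ∀ m, c m ≤ t + (1 / 2) ^ m := by
    intro m
    rw [hcdef, div_le_iff₀ (h2m m)]
    have := Nat.ceil_lt_add_one (by positivity : (0:ℝ) ≤ t * 2 ^ m)
    calc ((⌈t * 2 ^ m⌉₊ : ℕ) : ℝ) ≤ t * 2 ^ m + 1 := by linarith
      _ = (t + (1 / 2) ^ m) * 2 ^ m := by
          rw [add_mul, ← mul_pow, show (1 / 2 : ℝ) * 2 = 1 by norm_num, one_pow]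
  have htend : Filter.Tendsto c Filter.atTop (nhds t) := by
    have hupper : Filter.Tendsto (fun m : ℕ => t + (1 / 2) ^ m) Filter.atTop (nhds t) := by
      have := tendsto_pow_atTop_nhds_zero_of_lt_one (by norm_num : (0:ℝ) ≤ 1/2)
        (by norm_num : (1/2 : ℝ) < 1)
      simpa using Filter.Tendsto.const_add t this
    exact tendsto_of_tendsto_of_tendsto_of_le_of_le tendsto_const_nhds hupper hcge hcle
  have hstage : ∀ m, (hb.1.cfc (fun x => x ^ c m) - ha.1.cfc (fun x => x ^ c m)).PosSemidef := by
    intro m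
    have := lh_dyadic ha hb hab m _ (hck m)
    rwa [mpow_eq ha.1, mpow_eq hb.1] at this
  have hfinal := psd_of_tendsto ha.1 hb.1 (fun m => fun x => x ^ c m)
    (fun m => fun x => x ^ c m) (fun x => x ^ t) (fun x => x ^ t) hstage
    (fun i => rpow_exp_tendsto (ha.eigenvalues_nonneg i) ht hcpos htend)
    (fun i => rpow_exp_tendsto (hb.posSemidef.eigenvalues_nonneg i) ht hcpos htend)
  rwa [mpow_eq ha.1, mpow_eq hb.1]

lemma psd_smul_one {c : ℝ} (hc : 0 ≤ c) : ((c : ℂ) • (1 : Matrix n n ℂ)).PosSemidef := by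
  rw [smul_one_eq_diagonal]
  exact posSemidef_diagonal_iff.mpr fun i => by
    rw [Complex.zero_le_real]
    exact hc

lemma posDef_add_smul_one {b : Matrix n n ℂ} (hb : b.PosSemidef) {c : ℝ} (hc : 0 < c) :
    (b + (c : ℂ) • (1 : Matrix n n ℂ)).PosDef := by
  refine PosDef.of_dotProduct_mulVec_pos (hb.1.add (psd_smul_one hc.le).1) fun x hx => ?_
  rw [add_mulVec, dotProduct_add]
  refine add_pos_of_nonneg_of_pos (hb.dotProduct_mulVec_nonneg x) ?_
  rw [smul_mulVec, one_mulVec, dotProduct_smul, smul_eq_mul, star_dot_self,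
    ← Complex.ofReal_mul]
  rw [Complex.zero_lt_real]
  exact mul_pos hc (sum_normSq_pos hx)

/-- Löwner–Heinz: `x ↦ x^t` is operator monotone on PSD matrices for `0 < t ≤ 1`. -/
lemma lowner_heinz {a b : Matrix n n ℂ} (ha : a.PosSemidef) (hb : b.PosSemidef)
    (hab : (b - a).PosSemidef) {t : ℝ} (ht : 0 < t) (ht1 : t ≤ 1) :
    (mpow b t - mpow a t).PosSemidef := by
  set e : ℕ → ℝ := fun m => 1 / ((m : ℝ) + 1) with hedef
  have hepos : ∀ m, 0 < e m := fun m => by positivity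
  have hstage : ∀ m, (hb.1.cfc (fun x => (x + e m) ^ t) - ha.1.cfc (fun x => x ^ t)).PosSemidef := by
    intro m
    have hbm : (b + ((e m : ℝ) : ℂ) • (1 : Matrix n n ℂ)).PosDef :=
      posDef_add_smul_one hb (hepos m)
    have habm : (b + ((e m : ℝ) : ℂ) • (1 : Matrix n n ℂ) - a).PosSemidef := by
      rw [add_sub_right_comm]
      exact hab.add (psd_smul_one (hepos m).le)
    have := lh_pd ha hbm habm ht ht1
    rwa [mpow_shift hb.1 (e m) ht, mpow_eq ha.1] at this
  have htendB : ∀ i, Filter.Tendsto (fun m => (hb.1.eigenvalues i + e m) ^ t) Filter.atTop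
      (nhds (hb.1.eigenvalues i ^ t)) := by
    intro i
    have hbase : Filter.Tendsto (fun m => hb.1.eigenvalues i + e m) Filter.atTop
        (nhds (hb.1.eigenvalues i)) := by
      have h0 : Filter.Tendsto e Filter.atTop (nhds 0) := by
        rw [hedef]
        exact tendsto_one_div_add_atTop_nhds_zero_nat
      simpa [hedef, one_div] using Filter.Tendsto.const_add (hb.1.eigenvalues i) h0
    exact ((Real.continuousAt_rpow_const _ t (Or.inr ht.le)).tendsto).comp hbase
  have hfinal := psd_of_tendsto ha.1 hb.1 (fun _ => fun x => x ^ t)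
    (fun m => fun x => (x + e m) ^ t) (fun x => x ^ t) (fun x => x ^ t) hstage
    (fun i => tendsto_const_nhds) htendB
  rwa [mpow_eq ha.1, mpow_eq hb.1]

lemma quad_form (hA : A.IsHermitian) (x : n → ℂ) :
    star x ⬝ᵥ (A *ᵥ x) = ((∑ i, hA.eigenvalues i *
      Complex.normSq ((star (hA.eigenvectorUnitary : Matrix n n ℂ) *ᵥ x) i) : ℝ) : ℂ) := by
  conv_lhs => rw [← cfc_id' hA]
  exact cfc_form hA _ x

lemma sum_normSq_coord (hA : A.IsHermitian) (x : n → ℂ) :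
    ∑ i, Complex.normSq ((star (hA.eigenvectorUnitary : Matrix n n ℂ) *ᵥ x) i)
      = ∑ i, Complex.normSq (x i) := by
  have h1 := cfc_form hA (fun _ => 1) x
  rw [cfc_one, one_mulVec, star_dot_self] at h1
  have h2 : (∑ i, Complex.normSq (x i)) =
      ∑ i, (1 : ℝ) * Complex.normSq ((star (hA.eigenvectorUnitary : Matrix n n ℂ) *ᵥ x) i) := by
    exact_mod_cast h1
  simpa [one_mul] using h2.symm

lemma coeff_zero (hA : A.IsHermitian) {ι : Type*} (g : ι → n)
    {x : EuclideanSpace ℂ n}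
    (hx : x ∈ Submodule.span ℂ (Set.range (fun j => hA.eigenvectorBasis (g j))))
    {i : n} (hi : ∀ j, g j ≠ i) :
    (star (hA.eigenvectorUnitary : Matrix n n ℂ) *ᵥ (WithLp.equiv 2 (n → ℂ)) x) i = 0 := by
  induction hx using Submodule.span_induction with
  | mem z hz =>
    obtain ⟨j, rfl⟩ := hz
    change (star (hA.eigenvectorUnitary : Matrix n n ℂ) *ᵥ ⇑(hA.eigenvectorBasis (g j))) i = 0
    rw [Matrix.IsHermitian.star_eigenvectorUnitary_mulVec]
    exact Pi.single_eq_of_ne (Ne.symm (hi j)) 1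
  | zero =>
    rw [show (WithLp.equiv 2 (n → ℂ)) 0 = 0 from rfl, mulVec_zero]
    rfl
  | add z w hz hw ihz ihw =>
    rw [show (WithLp.equiv 2 (n → ℂ)) (z + w) = (WithLp.equiv 2 (n → ℂ)) z + (WithLp.equiv 2 (n → ℂ)) w from rfl, mulVec_add]
    rw [Pi.add_apply, ihz, ihw, add_zero]
  | smul c z hz ihz =>
    rw [show (WithLp.equiv 2 (n → ℂ)) (c • z) = c • (WithLp.equiv 2 (n → ℂ)) z from rfl, mulVec_smul]
    rw [Pi.smul_apply, ihz, smul_zero]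

lemma span_bound_lower (hA : A.IsHermitian) {ι : Type*} (g : ι → n) (c : ℝ)
    (hc : ∀ j, c ≤ hA.eigenvalues (g j)) {x : EuclideanSpace ℂ n}
    (hx : x ∈ Submodule.span ℂ (Set.range (fun j => hA.eigenvectorBasis (g j)))) :
    c * ∑ i, Complex.normSq ((WithLp.equiv 2 (n → ℂ)) x i)
      ≤ (star ((WithLp.equiv 2 (n → ℂ)) x) ⬝ᵥ (A *ᵥ (WithLp.equiv 2 (n → ℂ)) x)).re := by
  rw [quad_form hA ((WithLp.equiv 2 (n → ℂ)) x), Complex.ofReal_re,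
    ← sum_normSq_coord hA ((WithLp.equiv 2 (n → ℂ)) x), Finset.mul_sum]
  refine Finset.sum_le_sum fun i _ => ?_
  by_cases hcase : ∃ j, g j = i
  · obtain ⟨j, rfl⟩ := hcase
    exact mul_le_mul_of_nonneg_right (hc j) (Complex.normSq_nonneg _)
  · rw [coeff_zero hA g hx fun j h => hcase ⟨j, h⟩]
    simp

lemma span_bound_upper (hA : A.IsHermitian) {ι : Type*} (g : ι → n) (c : ℝ)
    (hc : ∀ j, hA.eigenvalues (g j) ≤ c) {x : EuclideanSpace ℂ n}
    (hx : x ∈ Submodule.span ℂ (Set.range (fun j => hA.eigenvectorBasis (g j)))) :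
    (star ((WithLp.equiv 2 (n → ℂ)) x) ⬝ᵥ (A *ᵥ (WithLp.equiv 2 (n → ℂ)) x)).re
      ≤ c * ∑ i, Complex.normSq ((WithLp.equiv 2 (n → ℂ)) x i) := by
  rw [quad_form hA ((WithLp.equiv 2 (n → ℂ)) x), Complex.ofReal_re,
    ← sum_normSq_coord hA ((WithLp.equiv 2 (n → ℂ)) x), Finset.mul_sum]
  refine Finset.sum_le_sum fun i _ => ?_
  by_cases hcase : ∃ j, g j = i
  · obtain ⟨j, rfl⟩ := hcase
    exact mul_le_mul_of_nonneg_right (hc j) (Complex.normSq_nonneg _)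
  · rw [coeff_zero hA g hx fun j h => hcase ⟨j, h⟩]
    simp

lemma equiv_ne_zero {x : EuclideanSpace ℂ n} (hx : x ≠ 0) :
    (WithLp.equiv 2 (n → ℂ)) x ≠ 0 := by
  intro h
  exact hx ((WithLp.equiv 2 (n → ℂ)).injective (by rw [show (WithLp.equiv 2 (n → ℂ)) 0 = 0 from rfl]; exact h))

lemma weyl_key {A B : Matrix n n ℂ} (hA : A.IsHermitian) (hB : B.IsHermitian)
    (hAB : (B - A).PosSemidef) (e : Fin (Fintype.card n) ≃ n) (k : Fin (Fintype.card n)) :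
    hA.eigenvalues (e (Tuple.sort (fun j => hA.eigenvalues (e j)) k)) ≤
      hB.eigenvalues (e (Tuple.sort (fun j => hB.eigenvalues (e j)) k)) := by
  classical
  set μA : Fin (Fintype.card n) → ℝ := fun j => hA.eigenvalues (e j) with hμA
  set μB : Fin (Fintype.card n) → ℝ := fun j => hB.eigenvalues (e j) with hμB
  set σA := Tuple.sort μA with hσA
  set σB := Tuple.sort μB with hσB
  set gA : Set.Ici k → n := fun j => e (σA j.1) with hgA
  set gB : Set.Iic k → n := fun j => e (σB j.1) with hgB
  have hinjA : Function.Injective gA := fun j j' h => Subtype.ext (σA.injective (e.injective h))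
  have hinjB : Function.Injective gB := fun j j' h => Subtype.ext (σB.injective (e.injective h))
  have honA : Orthonormal ℂ (fun j => hA.eigenvectorBasis (gA j)) :=
    hA.eigenvectorBasis.orthonormal.comp gA hinjA
  have honB : Orthonormal ℂ (fun j => hB.eigenvectorBasis (gB j)) :=
    hB.eigenvectorBasis.orthonormal.comp gB hinjB
  set U := Submodule.span ℂ (Set.range (fun j => hA.eigenvectorBasis (gA j))) with hU
  set V := Submodule.span ℂ (Set.range (fun j => hB.eigenvectorBasis (gB j))) with hV
  have hdimU : Module.finrank ℂ U = Fintype.card n - k := by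
    rw [hU, finrank_span_eq_card honA.linearIndependent, Fintype.card_Ici, Fin.card_Ici]
  have hdimV : Module.finrank ℂ V = k + 1 := by
    rw [hV, finrank_span_eq_card honB.linearIndependent, Fintype.card_Iic, Fin.card_Iic]
  have hsum := Submodule.finrank_sup_add_finrank_inf_eq U V
  have hsup : Module.finrank ℂ ↥(U ⊔ V) ≤ Fintype.card n := by
    have := Submodule.finrank_le (U ⊔ V)
    rwa [finrank_euclideanSpace] at this
  have hinf : 0 < Module.finrank ℂ ↥(U ⊓ V) := by
    have hk := k.2
    omega
  have hne : U ⊓ V ≠ ⊥ := by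
    intro hbot
    rw [hbot, finrank_bot] at hinf
    exact lt_irrefl 0 hinf
  obtain ⟨x, hxUV, hx0⟩ := Submodule.exists_mem_ne_zero_of_ne_bot hne
  have hTpos : 0 < ∑ i, Complex.normSq ((WithLp.equiv 2 (n → ℂ)) x i) :=
    sum_normSq_pos (equiv_ne_zero hx0)
  have hlow := span_bound_lower hA gA (μA (σA k))
    (fun j => Tuple.monotone_sort μA j.2) hxUV.1
  have hupp := span_bound_upper hB gB (μB (σB k))
    (fun j => Tuple.monotone_sort μB j.2) hxUV.2
  have hmid : (star ((WithLp.equiv 2 (n → ℂ)) x) ⬝ᵥ (A *ᵥ (WithLp.equiv 2 (n → ℂ)) x)).re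
      ≤ (star ((WithLp.equiv 2 (n → ℂ)) x) ⬝ᵥ (B *ᵥ (WithLp.equiv 2 (n → ℂ)) x)).re := by
    have h2 := hAB.dotProduct_mulVec_nonneg ((WithLp.equiv 2 (n → ℂ)) x)
    rw [sub_mulVec, dotProduct_sub] at h2
    have h3 := (Complex.le_def.mp h2).1
    rw [Complex.zero_re, Complex.sub_re] at h3
    linarith
  show μA (σA k) ≤ μB (σB k)
  exact le_of_mul_le_mul_right (by linarith) hTpos

lemma eig_sum_mono {A B : Matrix n n ℂ} (hA : A.PosSemidef) (hB : B.PosSemidef)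
    (hAB : (B - A).PosSemidef) {f : ℝ → ℝ} (hf : MonotoneOn f (Set.Ici 0)) :
    ∑ i, f (hA.1.eigenvalues i) ≤ ∑ i, f (hB.1.eigenvalues i) := by
  classical
  set e := (Fintype.equivFin n).symm with he
  set μA : Fin (Fintype.card n) → ℝ := fun j => hA.1.eigenvalues (e j) with hμA
  set μB : Fin (Fintype.card n) → ℝ := fun j => hB.1.eigenvalues (e j) with hμB
  calc ∑ i, f (hA.1.eigenvalues i)
      = ∑ j, f (μA j) := (Equiv.sum_comp e fun i => f (hA.1.eigenvalues i)).symm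
    _ = ∑ k, f (μA (Tuple.sort μA k)) :=
        (Equiv.sum_comp (Tuple.sort μA) fun j => f (μA j)).symm
    _ ≤ ∑ k, f (μB (Tuple.sort μB k)) := by
        refine Finset.sum_le_sum fun k _ => ?_
        refine hf (Set.mem_Ici.mpr (hA.eigenvalues_nonneg _))
          (Set.mem_Ici.mpr (hB.eigenvalues_nonneg _)) ?_
        exact weyl_key hA.1 hB.1 hAB e k
    _ = ∑ j, f (μB j) := Equiv.sum_comp (Tuple.sort μB) fun j => f (μB j)
    _ = ∑ i, f (hB.1.eigenvalues i) := Equiv.sum_comp e fun i => f (hB.1.eigenvalues i)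

lemma trace_mpow_eq {X : Matrix n n ℂ} (hX : X.IsHermitian) (z : ℝ) :
    (mpow X z).trace = ((∑ i, hX.eigenvalues i ^ z : ℝ) : ℂ) := by
  rw [mpow_eq hX, cfc_trace]

end QazAux

/-- For `0 < α < 1` and `z ≥ α`, `Q_{α,z}(·‖σ)` is monotone in the first argument
with respect to the Loewner order. -/
theorem Qaz_mono_left (n : ℕ) (α z : ℝ) (hα0 : 0 < α) (hα1 : α < 1) (hz : α ≤ z)
    (ρ₁ ρ₂ σ : Matrix (Fin n) (Fin n) ℂ)
    (hρ₁ : ρ₁.PosSemidef) (hρ₂ : ρ₂.PosSemidef) (hσ : σ.PosSemidef)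
    (hle : (ρ₂ - ρ₁).PosSemidef) :
    Qaz α z ρ₁ σ ≤ Qaz α z ρ₂ σ := by
  have hz0 : 0 < z := lt_of_lt_of_le hα0 hz
  have hp0 : 0 < α / z := div_pos hα0 hz0
  have hp1 : α / z ≤ 1 := (div_le_one hz0).mpr hz
  have hlh := QazAux.lowner_heinz hρ₁ hρ₂ hle hp0 hp1
  have hCH : (mpow σ ((1 - α) / (2 * z)))ᴴ = mpow σ ((1 - α) / (2 * z)) :=
    QazAux.mpow_conjTranspose σ _
  have hX₁psd : (mpow σ ((1 - α) / (2 * z)) * mpow ρ₁ (α / z) *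
      mpow σ ((1 - α) / (2 * z))).PosSemidef := by
    have := (QazAux.mpow_posSemidef hρ₁ (α / z)).mul_mul_conjTranspose_same
      (mpow σ ((1 - α) / (2 * z)))
    rwa [hCH] at this
  have hX₂psd : (mpow σ ((1 - α) / (2 * z)) * mpow ρ₂ (α / z) *
      mpow σ ((1 - α) / (2 * z))).PosSemidef := by
    have := (QazAux.mpow_posSemidef hρ₂ (α / z)).mul_mul_conjTranspose_same
      (mpow σ ((1 - α) / (2 * z)))
    rwa [hCH] at this
  have hdiff : (mpow σ ((1 - α) / (2 * z)) * mpow ρ₂ (α / z) * mpow σ ((1 - α) / (2 * z)) -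
      mpow σ ((1 - α) / (2 * z)) * mpow ρ₁ (α / z) *
        mpow σ ((1 - α) / (2 * z))).PosSemidef := by
    have h1 := hlh.mul_mul_conjTranspose_same (mpow σ ((1 - α) / (2 * z)))
    rw [hCH] at h1
    have e : mpow σ ((1 - α) / (2 * z)) * (mpow ρ₂ (α / z) - mpow ρ₁ (α / z)) *
        mpow σ ((1 - α) / (2 * z))
        = mpow σ ((1 - α) / (2 * z)) * mpow ρ₂ (α / z) * mpow σ ((1 - α) / (2 * z)) -
          mpow σ ((1 - α) / (2 * z)) * mpow ρ₁ (α / z) * mpow σ ((1 - α) / (2 * z)) := by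
      noncomm_ring
    rwa [e] at h1
  unfold Qaz
  rw [QazAux.trace_mpow_eq hX₁psd.1, QazAux.trace_mpow_eq hX₂psd.1,
    Complex.ofReal_re, Complex.ofReal_re]
  exact QazAux.eig_sum_mono hX₁psd hX₂psd hdiff
    (fun x hx y _ hxy => Real.rpow_le_rpow hx hxy hz0.le)
end

section
/- Let α > 1 and z > 0, and let ρ, ρ₁, ρ₂, σ, σ₁, σ₂ be n×n positive semidefinite complex matrices. (a) If z ≥ α, ρ₁ ≤ ρ₂ in the Loewner order, and the support of ρ₂ is contained in the support of σ (i.e., σv = 0 implies ρ₂v = 0), then Q_{α,z}(ρ₁‖σ) ≤ Q_{α,z}(ρ₂‖σ). (b) If z ≥ α − 1, σ₁ ≤ σ₂ in the Loewner order, and the support of ρ is contained in the support of σ₁, then Q_{α,z}(ρ‖σ₁) ≥ Q_{α,z}(ρ‖σ₂). -/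
set_option linter.unusedSectionVars false
set_option maxHeartbeats 1000000

open Matrix
open scoped ComplexOrder

namespace Renyi

variable {n : Type*} [Fintype n] [DecidableEq n]

/-- Apply a real function to a Hermitian matrix through its spectral decomposition. -/
noncomputable def specFun {A : Matrix n n ℂ} (hA : A.IsHermitian) (f : ℝ → ℝ) : Matrix n n ℂ :=
  (hA.eigenvectorUnitary : Matrix n n ℂ) *
    Matrix.diagonal (fun i => ((f (hA.eigenvalues i) : ℝ) : ℂ)) *
    star (hA.eigenvectorUnitary : Matrix n n ℂ)

lemma mpow_eq_specFun {A : Matrix n n ℂ} (hA : A.IsHermitian) (t : ℝ) :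
    mpow A t = specFun hA (fun x => x ^ t) := by
  simp [mpow, specFun, dif_pos hA]

lemma mpow_of_not_isHermitian {A : Matrix n n ℂ} (hA : ¬ A.IsHermitian) (t : ℝ) :
    mpow A t = 0 := dif_neg hA

lemma specFun_isHermitian {A : Matrix n n ℂ} (hA : A.IsHermitian) (f : ℝ → ℝ) :
    (specFun hA f).IsHermitian := by
  rw [specFun, Matrix.star_eq_conjTranspose]
  apply Matrix.isHermitian_mul_mul_conjTranspose
  rw [Matrix.isHermitian_diagonal_iff]
  intro i
  exact Complex.conj_ofReal _

lemma mpow_isHermitian (A : Matrix n n ℂ) (t : ℝ) : (mpow A t).IsHermitian := by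
  by_cases hA : A.IsHermitian
  · rw [mpow_eq_specFun hA]; exact specFun_isHermitian hA _
  · rw [mpow_of_not_isHermitian hA]; exact isHermitian_zero

lemma star_mul_self_eigenvectorUnitary {A : Matrix n n ℂ} (hA : A.IsHermitian) :
    star (hA.eigenvectorUnitary : Matrix n n ℂ) * (hA.eigenvectorUnitary : Matrix n n ℂ) = 1 :=
  Unitary.coe_star_mul_self hA.eigenvectorUnitary

lemma mul_star_self_eigenvectorUnitary {A : Matrix n n ℂ} (hA : A.IsHermitian) :
    (hA.eigenvectorUnitary : Matrix n n ℂ) * star (hA.eigenvectorUnitary : Matrix n n ℂ) = 1 :=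
  Unitary.coe_mul_star_self hA.eigenvectorUnitary

lemma specFun_mul_specFun {A : Matrix n n ℂ} (hA : A.IsHermitian) (f g : ℝ → ℝ) :
    specFun hA f * specFun hA g = specFun hA (fun x => f x * g x) := by
  rw [specFun, specFun, specFun]
  rw [show ∀ (X Y D E : Matrix n n ℂ), X * D * Y * (X * E * Y) = X * (D * ((Y * X) * E)) * Y by
    intros; noncomm_ring]
  rw [star_mul_self_eigenvectorUnitary hA, one_mul, Matrix.diagonal_mul_diagonal]
  congr 2
  ext i
  push_cast
  ring

lemma specFun_congr {A : Matrix n n ℂ} (hA : A.IsHermitian) {f g : ℝ → ℝ}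
    (h : ∀ i, f (hA.eigenvalues i) = g (hA.eigenvalues i)) :
    specFun hA f = specFun hA g := by
  unfold specFun
  congr 2
  exact congrArg Matrix.diagonal (funext fun i => congrArg _ (h i))

lemma specFun_const {A : Matrix n n ℂ} (hA : A.IsHermitian) (c : ℝ) :
    specFun hA (fun _ => c) = (c : ℂ) • 1 := by
  rw [specFun]
  have : Matrix.diagonal (fun _ : n => ((c : ℝ) : ℂ)) = (c : ℂ) • 1 := by
    rw [← Matrix.diagonal_one, ← Matrix.diagonal_smul]
    ext i j
    by_cases hij : i = j <;> simp [Matrix.diagonal, Matrix.one_apply, hij]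
  rw [this]
  simp only [Matrix.mul_smul, Matrix.smul_mul, mul_one]
  rw [mul_star_self_eigenvectorUnitary hA]

lemma specFun_id {A : Matrix n n ℂ} (hA : A.IsHermitian) :
    specFun hA (fun x => x) = A := by
  rw [specFun]
  exact (hA.spectral_theorem).symm

lemma specFun_add {A : Matrix n n ℂ} (hA : A.IsHermitian) (f g : ℝ → ℝ) :
    specFun hA (fun x => f x + g x) = specFun hA f + specFun hA g := by
  unfold specFun
  rw [← Matrix.add_mul, ← Matrix.mul_add, Matrix.diagonal_add]
  congr 3
  ext i
  push_cast
  ring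

lemma specFun_posSemidef {A : Matrix n n ℂ} (hA : A.IsHermitian) {f : ℝ → ℝ}
    (hf : ∀ i, 0 ≤ f (hA.eigenvalues i)) : (specFun hA f).PosSemidef := by
  rw [specFun, Matrix.star_eq_conjTranspose]
  apply Matrix.PosSemidef.mul_mul_conjTranspose_same
  apply Matrix.PosSemidef.diagonal
  intro i
  exact Complex.zero_le_real.mpr (hf i)

lemma trace_specFun {A : Matrix n n ℂ} (hA : A.IsHermitian) (f : ℝ → ℝ) :
    (specFun hA f).trace = ∑ i, ((f (hA.eigenvalues i) : ℝ) : ℂ) := by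
  rw [specFun, Matrix.trace_mul_cycle,
    star_mul_self_eigenvectorUnitary hA, one_mul, Matrix.trace_diagonal]


/-- Coordinates of a vector in the eigenbasis. -/
noncomputable def coords {A : Matrix n n ℂ} (hA : A.IsHermitian) (v : n → ℂ) : n → ℂ :=
  star (hA.eigenvectorUnitary : Matrix n n ℂ) *ᵥ v

lemma star_vecMul_eigenvectorUnitary {A : Matrix n n ℂ} (hA : A.IsHermitian) (v : n → ℂ) :
    star v ᵥ* (hA.eigenvectorUnitary : Matrix n n ℂ) = star (coords hA v) := by
  rw [coords, Matrix.star_mulVec, Matrix.star_eq_conjTranspose, Matrix.conjTranspose_conjTranspose]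

lemma qf_specFun {A : Matrix n n ℂ} (hA : A.IsHermitian) (f : ℝ → ℝ) (v : n → ℂ) :
    star v ⬝ᵥ (specFun hA f *ᵥ v) =
      ∑ i, ((f (hA.eigenvalues i) * Complex.normSq (coords hA v i) : ℝ) : ℂ) := by
  rw [specFun, ← Matrix.mulVec_mulVec, ← Matrix.mulVec_mulVec, Matrix.dotProduct_mulVec,
    star_vecMul_eigenvectorUnitary hA]
  rw [show star (hA.eigenvectorUnitary : Matrix n n ℂ) *ᵥ v = coords hA v from rfl]
  simp only [dotProduct, Matrix.mulVec_diagonal]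
  congr 1
  ext i
  have : (star (coords hA v)) i * (((f (hA.eigenvalues i) : ℝ) : ℂ)  * coords hA v i)
      = ((f (hA.eigenvalues i) : ℝ) : ℂ) * ((starRingEnd ℂ) (coords hA v i) * coords hA v i) := by
    simp only [Pi.star_apply, RCLike.star_def]; ring
  rw [this, Complex.normSq_eq_conj_mul_self.symm]
  push_cast
  ring

lemma qf_specFun_re {A : Matrix n n ℂ} (hA : A.IsHermitian) (f : ℝ → ℝ) (v : n → ℂ) :
    (star v ⬝ᵥ (specFun hA f *ᵥ v)).re =
      ∑ i, f (hA.eigenvalues i) * Complex.normSq (coords hA v i) := by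
  rw [qf_specFun hA f v]
  push_cast
  rw [Complex.re_sum]
  congr 1; ext i
  simp

lemma dotProduct_star_self_re (v : n → ℂ) :
    (star v ⬝ᵥ v).re = ∑ i, Complex.normSq (v i) := by
  simp only [dotProduct, Pi.star_apply, RCLike.star_def]
  rw [Complex.re_sum]
  congr 1; ext i
  simp [Complex.normSq_apply, Complex.mul_re]

lemma sum_normSq_coords {A : Matrix n n ℂ} (hA : A.IsHermitian) (v : n → ℂ) :
    ∑ i, Complex.normSq (coords hA v i) = ∑ i, Complex.normSq (v i) := by
  rw [← dotProduct_star_self_re (coords hA v), ← dotProduct_star_self_re v]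
  congr 1
  rw [coords, Matrix.star_mulVec, Matrix.dotProduct_mulVec, Matrix.vecMul_vecMul,
    Matrix.star_eq_conjTranspose, Matrix.conjTranspose_conjTranspose,
    show (hA.eigenvectorUnitary : Matrix n n ℂ) * (hA.eigenvectorUnitary : Matrix n n ℂ)ᴴ = 1 by
      rw [← Matrix.star_eq_conjTranspose]; exact mul_star_self_eigenvectorUnitary hA,
    Matrix.vecMul_one]

lemma coords_eigen {A : Matrix n n ℂ} (hA : A.IsHermitian) {u : n → ℂ} (hu : A *ᵥ u = 0) (i : n) :
    (hA.eigenvalues i : ℂ) * coords hA u i = 0 := by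
  have key : star (hA.eigenvectorUnitary : Matrix n n ℂ) * A =
      Matrix.diagonal (fun i => ((hA.eigenvalues i : ℝ) : ℂ)) *
        star (hA.eigenvectorUnitary : Matrix n n ℂ) := by
    have e1 := congrArg (fun X => star (hA.eigenvectorUnitary : Matrix n n ℂ) * X)
      (specFun_id hA).symm
    simp only [specFun] at e1
    rw [e1, ← Matrix.mul_assoc, ← Matrix.mul_assoc, star_mul_self_eigenvectorUnitary hA, one_mul]
  have h1 : Matrix.diagonal (fun i => ((hA.eigenvalues i : ℝ) : ℂ)) *ᵥ coords hA u = 0 := by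
    rw [coords, Matrix.mulVec_mulVec, ← key, ← Matrix.mulVec_mulVec, hu, Matrix.mulVec_zero]
  have := congrFun h1 i
  rw [Matrix.mulVec_diagonal] at this
  simpa using this

lemma specFun_mulVec_zero {A : Matrix n n ℂ} (hA : A.IsHermitian) {f : ℝ → ℝ} (hf : f 0 = 0)
    {u : n → ℂ} (hu : A *ᵥ u = 0) : specFun hA f *ᵥ u = 0 := by
  rw [specFun, ← Matrix.mulVec_mulVec, ← Matrix.mulVec_mulVec]
  rw [show star (hA.eigenvectorUnitary : Matrix n n ℂ) *ᵥ u = coords hA u from rfl]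
  have : Matrix.diagonal (fun i => ((f (hA.eigenvalues i) : ℝ) : ℂ)) *ᵥ coords hA u = 0 := by
    ext i
    rw [Matrix.mulVec_diagonal]
    rcases eq_or_ne (hA.eigenvalues i) 0 with h | h
    · simp [h, hf]
    · have := coords_eigen hA hu i
      have hc : coords hA u i = 0 := by
        rcases mul_eq_zero.mp this with h' | h'
        · exact absurd (by exact_mod_cast h') h
        · exact h'
      simp [hc]
  rw [this, Matrix.mulVec_zero]

lemma specFun_addScalar {A : Matrix n n ℂ} (hA : A.IsHermitian) (c : ℝ) :
    specFun hA (fun x => x + c) = A + (c : ℂ) • 1 := by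
  rw [specFun_add hA (fun x => x) (fun _ => c), specFun_id hA, specFun_const hA c]

lemma specFun_addScalar_inv {A : Matrix n n ℂ} (hA : A.IsHermitian) {c : ℝ}
    (hc : ∀ i, hA.eigenvalues i + c ≠ 0) :
    (A + (c : ℂ) • 1)⁻¹ = specFun hA (fun x => (x + c)⁻¹) := by
  apply Matrix.inv_eq_right_inv
  rw [← specFun_addScalar hA c, specFun_mul_specFun hA]
  rw [specFun_congr hA (g := fun _ => 1) (fun i => mul_inv_cancel₀ (hc i)), specFun_const hA 1]
  simp

lemma addScalar_posDef {A : Matrix n n ℂ} (hA : A.PosSemidef) {c : ℝ} (hc : 0 < c) :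
    (A + (c : ℂ) • 1).PosDef := by
  apply Matrix.PosDef.posSemidef_add hA
  refine Matrix.PosDef.of_dotProduct_mulVec_pos (by simp [Matrix.IsHermitian, Complex.conj_ofReal]) (fun x hx => ?_)
  rw [Matrix.smul_mulVec, Matrix.one_mulVec, dotProduct_smul]
  have h1 : (0:ℂ) < star x ⬝ᵥ x := by
    rw [show star x ⬝ᵥ x = ((∑ i, Complex.normSq (x i) : ℝ) : ℂ) by
      push_cast
      simp only [dotProduct, Pi.star_apply, RCLike.star_def]
      congr 1; ext i; rw [Complex.normSq_eq_conj_mul_self]]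
    rw [Complex.zero_lt_real]
    have : ∃ i, x i ≠ 0 := by
      by_contra h
      push_neg at h
      exact hx (funext h)
    obtain ⟨i, hi⟩ := this
    apply Finset.sum_pos' (fun j _ => Complex.normSq_nonneg _)
    exact ⟨i, Finset.mem_univ i, by simpa using Complex.normSq_pos.mpr hi⟩
  have : (0:ℂ) < c := Complex.zero_lt_real.mpr hc
  rw [smul_eq_mul]
  exact mul_pos this h1


lemma re_dotProduct_comm (v w : n → ℂ) : (star v ⬝ᵥ w).re = (star w ⬝ᵥ v).re := by
  rw [Matrix.star_dotProduct]
  exact Complex.conj_re _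

lemma re_qf_le_of_sub_posSemidef {A B : Matrix n n ℂ} (h : (B - A).PosSemidef) (v : n → ℂ) :
    (star v ⬝ᵥ A *ᵥ v).re ≤ (star v ⬝ᵥ B *ᵥ v).re := by
  have h0 := h.dotProduct_mulVec_nonneg v
  rw [Matrix.sub_mulVec, dotProduct_sub] at h0
  have := (Complex.le_def.mp h0).1
  simp only [Complex.zero_re, Complex.sub_re] at this
  linarith

lemma posSemidef_of_re {M : Matrix n n ℂ} (hM : M.IsHermitian)
    (h : ∀ v, 0 ≤ (star v ⬝ᵥ M *ᵥ v).re) : M.PosSemidef := by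
  refine Matrix.PosSemidef.of_dotProduct_mulVec_nonneg hM (fun x => ?_)
  have hsa : star (star x ⬝ᵥ M *ᵥ x) = star x ⬝ᵥ M *ᵥ x := by
    nth_rewrite 2 [Matrix.star_dotProduct]
    congr 1
    rw [Matrix.star_mulVec, hM.eq, ← Matrix.dotProduct_mulVec]
  rw [Complex.le_def]
  constructor
  · simpa using h x
  · have := congrArg Complex.im hsa
    simp only [RCLike.star_def, Complex.conj_im] at this
    simp only [Complex.zero_im]
    linarith

lemma posDef_isUnit_det {A : Matrix n n ℂ} (hA : A.PosDef) : IsUnit A.det :=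
  isUnit_iff_ne_zero.mpr (by
    have := hA.det_pos
    exact fun h => by rw [h] at this; exact lt_irrefl 0 this)

lemma key_ineq {A : Matrix n n ℂ} (hA : A.PosDef) (w v : n → ℂ) :
    2 * (star w ⬝ᵥ v).re ≤ (star w ⬝ᵥ A *ᵥ w).re + (star v ⬝ᵥ A⁻¹ *ᵥ v).re := by
  have hdet := posDef_isUnit_det hA
  have hinv : (A⁻¹).IsHermitian := hA.isHermitian.inv
  set u := A⁻¹ *ᵥ v with hu
  have staru : star u = star v ᵥ* A⁻¹ := by
    rw [hu, Matrix.star_mulVec, hinv.eq]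
  have e1 : star u ⬝ᵥ (A *ᵥ w) = star v ⬝ᵥ w := by
    rw [staru, ← Matrix.dotProduct_mulVec, Matrix.mulVec_mulVec, Matrix.nonsing_inv_mul A hdet,
      Matrix.one_mulVec]
  have e2 : star w ⬝ᵥ (A *ᵥ u) = star w ⬝ᵥ v := by
    rw [hu, Matrix.mulVec_mulVec, Matrix.mul_nonsing_inv A hdet, Matrix.one_mulVec]
  have e3 : star u ⬝ᵥ (A *ᵥ u) = star v ⬝ᵥ (A⁻¹ *ᵥ v) := by
    rw [staru, ← Matrix.dotProduct_mulVec, Matrix.mulVec_mulVec, Matrix.nonsing_inv_mul A hdet,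
      Matrix.one_mulVec]
  have h0 : 0 ≤ (star (w - u) ⬝ᵥ (A *ᵥ (w - u))).re := by
    have := (Complex.le_def.mp (hA.posSemidef.dotProduct_mulVec_nonneg (w - u))).1
    simpa using this
  have expand : star (w - u) ⬝ᵥ (A *ᵥ (w - u)) =
      star w ⬝ᵥ (A *ᵥ w) - (star w ⬝ᵥ v) - (star v ⬝ᵥ w) + star v ⬝ᵥ (A⁻¹ *ᵥ v) := by
    rw [star_sub, Matrix.mulVec_sub, sub_dotProduct, dotProduct_sub,
      dotProduct_sub, e1, e2, e3]
    ring
  rw [expand] at h0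
  have hre : (star v ⬝ᵥ w).re = (star w ⬝ᵥ v).re := re_dotProduct_comm v w
  simp only [Complex.add_re, Complex.sub_re] at h0
  linarith

lemma qf_inv_anti {A B : Matrix n n ℂ} (hA : A.PosDef) (hB : B.PosDef)
    (hAB : (B - A).PosSemidef) (v : n → ℂ) :
    (star v ⬝ᵥ B⁻¹ *ᵥ v).re ≤ (star v ⬝ᵥ A⁻¹ *ᵥ v).re := by
  have hdetB := posDef_isUnit_det hB
  set w := B⁻¹ *ᵥ v with hw
  have qB : star w ⬝ᵥ (B *ᵥ w) = star w ⬝ᵥ v := by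
    rw [hw, Matrix.mulVec_mulVec, Matrix.mul_nonsing_inv B hdetB, Matrix.one_mulVec]
  have h1 : (star v ⬝ᵥ B⁻¹ *ᵥ v).re = (star w ⬝ᵥ v).re := by
    rw [← hw, re_dotProduct_comm]
  have h2 : (star w ⬝ᵥ A *ᵥ w).re ≤ (star w ⬝ᵥ B *ᵥ w).re :=
    re_qf_le_of_sub_posSemidef hAB w
  have h3 := key_ineq hA w v
  rw [h1]
  have : (star w ⬝ᵥ (B *ᵥ w)).re = (star w ⬝ᵥ v).re := congrArg Complex.re qB
  linarith


open MeasureTheory in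
/-- Normalizing constant for the integral representation of `x ^ p`. -/
noncomputable def Jc (p : ℝ) : ℝ := ∫ s in Set.Ioi (0:ℝ), s ^ (p-1) / (1+s)

lemma rpow_const_continuousOn (c : ℝ) : ContinuousOn (fun s : ℝ => s ^ c) (Set.Ioi 0) :=
  fun s hs => (Real.continuousAt_rpow_const s c (Or.inl (ne_of_gt hs))).continuousWithinAt

open MeasureTheory in
lemma base_aesm (p : ℝ) {S : Set ℝ} (hS : S ⊆ Set.Ioi 0) :
    AEStronglyMeasurable (fun s : ℝ => s ^ (p-1) / (1+s)) (volume.restrict S) := by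
  have hco : ContinuousOn (fun s : ℝ => s ^ (p-1) / (1+s)) (Set.Ioi 0) := by
    apply ContinuousOn.div (rpow_const_continuousOn (p-1))
      ((continuous_const.add continuous_id).continuousOn)
    intro s hs
    have : (0:ℝ) < s := hs
    exact ne_of_gt (by simp only [Pi.add_apply, id_eq]; linarith)
  exact (hco.aestronglyMeasurable measurableSet_Ioi).mono_measure
    (Measure.restrict_mono hS le_rfl)

open MeasureTheory in
lemma base_integrableOn {p : ℝ} (hp0 : 0 < p) (hp1 : p < 1) :
    IntegrableOn (fun s : ℝ => s ^ (p-1) / (1+s)) (Set.Ioi 0) := by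
  have h1 : IntegrableOn (fun s : ℝ => s ^ (p-1) / (1+s)) (Set.Ioc 0 1) := by
    have hg : IntegrableOn (fun s : ℝ => s ^ (p-1)) (Set.Ioc (0:ℝ) 1) := by
      have := intervalIntegral.intervalIntegrable_rpow' (a := 0) (b := 1) (r := p - 1)
        (by linarith)
      rwa [intervalIntegrable_iff_integrableOn_Ioc_of_le zero_le_one] at this
    apply Integrable.mono' hg (base_aesm p (fun x hx => hx.1))
    rw [ae_restrict_iff' measurableSet_Ioc]
    filter_upwards with s hs
    have hs0 : 0 < s := hs.1
    have hnn : 0 ≤ s ^ (p-1) / (1+s) := by positivity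
    rw [Real.norm_eq_abs, abs_of_nonneg hnn]
    apply div_le_self (Real.rpow_nonneg hs0.le _)
    linarith
  have h2 : IntegrableOn (fun s : ℝ => s ^ (p-1) / (1+s)) (Set.Ioi 1) := by
    have hg : IntegrableOn (fun s : ℝ => s ^ (p-2)) (Set.Ioi (1:ℝ)) :=
      integrableOn_Ioi_rpow_of_lt (by linarith) one_pos
    apply Integrable.mono' hg (base_aesm p (fun x hx => Set.mem_Ioi.mpr (lt_trans one_pos hx)))
    rw [ae_restrict_iff' measurableSet_Ioi]
    filter_upwards with s hs
    rw [Set.mem_Ioi] at hs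
    have hs0 : 0 < s := lt_trans one_pos hs
    have hnn : 0 ≤ s ^ (p-1) / (1+s) := by positivity
    rw [Real.norm_eq_abs, abs_of_nonneg hnn]
    have e1 : s ^ (p-2) = s ^ (p-1) / s := by
      rw [show p - 2 = (p-1) - 1 by ring, Real.rpow_sub hs0, Real.rpow_one]
    rw [e1]
    apply div_le_div_of_nonneg_left (Real.rpow_nonneg hs0.le _) hs0
    linarith
  have hunion : Set.Ioc (0:ℝ) 1 ∪ Set.Ioi 1 = Set.Ioi 0 := Set.Ioc_union_Ioi_eq_Ioi zero_le_one
  rw [← hunion]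
  exact h1.union h2

open MeasureTheory in
lemma Jc_pos {p : ℝ} (hp0 : 0 < p) (hp1 : p < 1) : 0 < Jc p := by
  rw [Jc]
  rw [setIntegral_pos_iff_support_of_nonneg_ae]
  · have hsub : Set.Ioi (0:ℝ) ⊆ Function.support (fun s : ℝ => s ^ (p-1) / (1+s)) ∩ Set.Ioi 0 := by
      intro s hs
      have hs0 : 0 < s := hs
      refine ⟨?_, hs⟩
      have : 0 < s ^ (p-1) / (1+s) := by positivity
      exact this.ne'
    calc (0:ENNReal) < volume (Set.Ioi (0:ℝ)) := by simp [Real.volume_Ioi]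
    _ ≤ volume (Function.support (fun s : ℝ => s ^ (p-1) / (1+s)) ∩ Set.Ioi 0) :=
      measure_mono hsub
  · have : ∀ᵐ s ∂(volume.restrict (Set.Ioi (0:ℝ))), 0 ≤ s ^ (p-1) / (1+s) := by
      rw [ae_restrict_iff' measurableSet_Ioi]
      filter_upwards with s hs
      have hs0 : 0 < s := hs
      positivity
    exact this.mono fun s h => h
  · exact base_integrableOn hp0 hp1


open MeasureTheory in
lemma kernel_integrableOn {p : ℝ} (hp0 : 0 < p) (hp1 : p < 1) {l : ℝ} (hl : 0 ≤ l) :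
    IntegrableOn (fun s : ℝ => l / (l + s) * s ^ (p-1)) (Set.Ioi 0) := by
  rcases eq_or_lt_of_le hl with h | h
  · apply (integrableOn_congr_fun ?_ measurableSet_Ioi).mpr (integrableOn_zero)
    intro s hs
    rw [← h]
    simp
  · have key : ∀ s ∈ Set.Ioi (0:ℝ), l / (l + s) * s ^ (p-1)
        = l ^ (p-1) * ((l⁻¹ * s) ^ (p-1) / (1 + l⁻¹ * s)) := by
      intro s hs
      have hs0 : 0 < s := hs
      have h1 : 1 + l⁻¹ * s = (l + s) / l := by field_simp
      rw [Real.mul_rpow (by positivity) hs0.le, h1]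
      rw [Real.inv_rpow h.le]
      field_simp
    apply (integrableOn_congr_fun key measurableSet_Ioi).mpr
    apply Integrable.const_mul
    have h2 := (integrableOn_Ioi_comp_mul_left_iff (fun s : ℝ => s ^ (p-1) / (1+s)) 0
      (inv_pos.mpr h)).mpr
    rw [mul_zero] at h2
    exact h2 (base_integrableOn hp0 hp1)

open MeasureTheory in
lemma rpow_rep {p : ℝ} (hp0 : 0 < p) (hp1 : p < 1) {l : ℝ} (hl : 0 ≤ l) :
    l ^ p * Jc p = ∫ s in Set.Ioi (0:ℝ), l / (l + s) * s ^ (p-1) := by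
  rcases eq_or_lt_of_le hl with h | h
  · rw [← h, Real.zero_rpow hp0.ne', zero_mul]
    symm
    rw [setIntegral_congr_fun measurableSet_Ioi (g := fun _ => (0:ℝ)) ?hg]
    · simp
    · intro s hs
      simp
  · have hcomp := integral_comp_mul_left_Ioi (fun s : ℝ => l / (l + s) * s ^ (p-1)) 0 h
    rw [mul_zero] at hcomp
    have key : ∀ x ∈ Set.Ioi (0:ℝ), l / (l + l * x) * (l * x) ^ (p-1)
        = l ^ (p-1) * (x ^ (p-1) / (1 + x)) := by
      intro x hx
      have hx0 : 0 < x := hx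
      have h1 : l + l * x = l * (1 + x) := by ring
      rw [Real.mul_rpow h.le hx0.le, h1]
      rw [div_mul_eq_mul_div, mul_comm]
      field_simp
    rw [setIntegral_congr_fun measurableSet_Ioi key] at hcomp
    rw [integral_const_mul] at hcomp
    rw [eq_comm, inv_smul_eq_iff₀ h.ne'] at hcomp
    simp only [smul_eq_mul] at hcomp
    rw [show (∫ s in Set.Ioi (0:ℝ), l / (l + s) * s ^ (p-1)) = l * (l ^ (p-1) * Jc p) from by
      rw [Jc]; exact hcomp]
    have hll : l ^ p = l ^ (p-1) * l := by
      have h3 := Real.rpow_add_one h.ne' (p-1)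
      rw [sub_add_cancel] at h3
      exact h3
    rw [hll]
    ring


lemma specFun_smul {A : Matrix n n ℂ} (hA : A.IsHermitian) (c : ℝ) (f : ℝ → ℝ) :
    specFun hA (fun x => c * f x) = (c : ℂ) • specFun hA f := by
  symm
  unfold specFun
  rw [← Matrix.smul_mul, ← Matrix.mul_smul, ← Matrix.diagonal_smul]
  congr 2
  apply congrArg Matrix.diagonal
  ext i
  simp only [Pi.smul_apply, smul_eq_mul]
  push_cast
  ring

lemma specFun_sub {A : Matrix n n ℂ} (hA : A.IsHermitian) (f g : ℝ → ℝ) :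
    specFun hA (fun x => f x - g x) = specFun hA f - specFun hA g := by
  unfold specFun
  rw [← Matrix.sub_mul, ← Matrix.mul_sub, Matrix.diagonal_sub]
  congr 3
  ext i
  push_cast
  ring

lemma mpow_eq_self {A : Matrix n n ℂ} (hA : A.IsHermitian) : mpow A 1 = A := by
  rw [mpow_eq_specFun hA, specFun_congr hA (g := fun x => x) (fun i => Real.rpow_one _),
    specFun_id hA]

lemma eig_add_pos {A : Matrix n n ℂ} (hA : A.PosSemidef) {s : ℝ} (hs : 0 < s) (i : n) :
    0 < hA.1.eigenvalues i + s :=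
  add_pos_of_nonneg_of_pos (hA.eigenvalues_nonneg i) hs

lemma specFun_resolvent {A : Matrix n n ℂ} (hA : A.PosSemidef) {s : ℝ} (hs : 0 < s) :
    specFun hA.1 (fun x => x / (x + s)) = 1 - (s : ℂ) • (A + (s : ℂ) • 1)⁻¹ := by
  have hne : ∀ i, hA.1.eigenvalues i + s ≠ 0 := fun i => (eig_add_pos hA hs i).ne'
  have h1 : specFun hA.1 (fun x => x / (x + s))
      = specFun hA.1 (fun x => 1 - s * (x + s)⁻¹) := by
    apply specFun_congr
    intro i
    rw [eq_sub_iff_add_eq, mul_comm, inv_mul_eq_div, ← add_div, div_self (hne i)]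
  rw [h1, specFun_sub hA.1 (fun _ => 1) (fun x => s * (x + s)⁻¹),
    specFun_smul hA.1 s (fun x => (x + s)⁻¹), ← specFun_addScalar_inv hA.1 hne,
    specFun_const hA.1 1]
  norm_num

lemma qf_resolvent_mono {A B : Matrix n n ℂ} (hA : A.PosSemidef) (hB : B.PosSemidef)
    (hAB : (B - A).PosSemidef) {s : ℝ} (hs : 0 < s) (v : n → ℂ) :
    (star v ⬝ᵥ specFun hA.1 (fun x => x / (x + s)) *ᵥ v).re ≤
      (star v ⬝ᵥ specFun hB.1 (fun x => x / (x + s)) *ᵥ v).re := by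
  rw [specFun_resolvent hA hs, specFun_resolvent hB hs]
  have expand : ∀ M : Matrix n n ℂ,
      (star v ⬝ᵥ (1 - (s:ℂ) • M) *ᵥ v).re = (star v ⬝ᵥ v).re - s * (star v ⬝ᵥ M *ᵥ v).re := by
    intro M
    rw [Matrix.sub_mulVec, dotProduct_sub, Matrix.one_mulVec, Matrix.smul_mulVec,
      dotProduct_smul, Complex.sub_re, smul_eq_mul, Complex.re_ofReal_mul]
  rw [expand, expand]
  have hmono := qf_inv_anti (addScalar_posDef hA hs) (addScalar_posDef hB hs)
    (by rw [show B + (s:ℂ)•1 - (A + (s:ℂ)•1) = B - A by abel]; exact hAB) v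
  nlinarith [hs.le, hmono]

lemma qf_kernel_sum {A : Matrix n n ℂ} (hA : A.PosSemidef) (v : n → ℂ) (p : ℝ) :
    ∀ s ∈ Set.Ioi (0:ℝ),
      (star v ⬝ᵥ specFun hA.1 (fun x => x / (x + s)) *ᵥ v).re * s ^ (p-1) =
      ∑ i, (hA.1.eigenvalues i / (hA.1.eigenvalues i + s) * s ^ (p-1)) *
        Complex.normSq (coords hA.1 v i) := by
  intro s _
  rw [qf_specFun_re, Finset.sum_mul]
  congr 1; ext i
  ring

open MeasureTheory in
lemma qf_kernel_integrableOn {A : Matrix n n ℂ} (hA : A.PosSemidef) (v : n → ℂ) {p : ℝ}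
    (hp0 : 0 < p) (hp1 : p < 1) :
    IntegrableOn (fun s : ℝ =>
      (star v ⬝ᵥ specFun hA.1 (fun x => x / (x + s)) *ᵥ v).re * s ^ (p-1)) (Set.Ioi 0) := by
  apply (integrableOn_congr_fun (qf_kernel_sum hA v p) measurableSet_Ioi).mpr
  apply integrable_finset_sum
  intro i _
  exact (kernel_integrableOn hp0 hp1 (hA.eigenvalues_nonneg i)).mul_const _

open MeasureTheory in
lemma qf_mpow_integral {A : Matrix n n ℂ} (hA : A.PosSemidef) (v : n → ℂ) {p : ℝ}
    (hp0 : 0 < p) (hp1 : p < 1) :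
    (star v ⬝ᵥ mpow A p *ᵥ v).re = (Jc p)⁻¹ *
      ∫ s in Set.Ioi (0:ℝ),
        (star v ⬝ᵥ specFun hA.1 (fun x => x / (x + s)) *ᵥ v).re * s ^ (p-1) := by
  rw [mpow_eq_specFun hA.1, qf_specFun_re]
  rw [setIntegral_congr_fun measurableSet_Ioi (qf_kernel_sum hA v p)]
  rw [integral_finset_sum _ (fun i _ =>
    (kernel_integrableOn hp0 hp1 (hA.eigenvalues_nonneg i)).mul_const _)]
  have hterm : ∀ i, (∫ s in Set.Ioi (0:ℝ),
      (hA.1.eigenvalues i / (hA.1.eigenvalues i + s) * s ^ (p-1)) *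
        Complex.normSq (coords hA.1 v i))
      = (hA.1.eigenvalues i ^ p * Jc p) * Complex.normSq (coords hA.1 v i) := by
    intro i
    rw [integral_mul_const, ← rpow_rep hp0 hp1 (hA.eigenvalues_nonneg i)]
  rw [Finset.sum_congr rfl (fun i _ => hterm i), Finset.mul_sum]
  congr 1; ext i
  have hJ := (Jc_pos hp0 hp1).ne'
  field_simp

/-- Löwner–Heinz: the quadratic-form inequality for `x ^ p`, `0 < p ≤ 1`. -/
lemma qf_lowner_heinz {A B : Matrix n n ℂ} (hA : A.PosSemidef) (hB : B.PosSemidef)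
    (hAB : (B - A).PosSemidef) {p : ℝ} (hp0 : 0 < p) (hp1 : p ≤ 1) (v : n → ℂ) :
    (star v ⬝ᵥ mpow A p *ᵥ v).re ≤ (star v ⬝ᵥ mpow B p *ᵥ v).re := by
  rcases eq_or_lt_of_le hp1 with h1 | h1
  · rw [h1, mpow_eq_self hA.1, mpow_eq_self hB.1]
    exact re_qf_le_of_sub_posSemidef hAB v
  · rw [qf_mpow_integral hA v hp0 h1, qf_mpow_integral hB v hp0 h1]
    apply mul_le_mul_of_nonneg_left ?_ (inv_nonneg.mpr (Jc_pos hp0 h1).le)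
    apply MeasureTheory.setIntegral_mono_on (qf_kernel_integrableOn hA v hp0 h1)
      (qf_kernel_integrableOn hB v hp0 h1) measurableSet_Ioi
    intro s hs
    have := qf_resolvent_mono hA hB hAB (Set.mem_Ioi.mp hs) v
    have hsp : 0 ≤ (s : ℝ) ^ (p-1) := Real.rpow_nonneg (le_of_lt (Set.mem_Ioi.mp hs)) _
    exact mul_le_mul_of_nonneg_right this hsp

lemma lowner_heinz {A B : Matrix n n ℂ} (hA : A.PosSemidef) (hB : B.PosSemidef)
    (hAB : (B - A).PosSemidef) {p : ℝ} (hp0 : 0 < p) (hp1 : p ≤ 1) :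
    (mpow B p - mpow A p).PosSemidef := by
  apply posSemidef_of_re ((mpow_isHermitian B p).sub (mpow_isHermitian A p))
  intro v
  rw [Matrix.sub_mulVec, dotProduct_sub, Complex.sub_re]
  have := qf_lowner_heinz hA hB hAB hp0 hp1 v
  linarith


lemma mpow_posSemidef {A : Matrix n n ℂ} (hA : A.PosSemidef) (t : ℝ) :
    (mpow A t).PosSemidef := by
  rw [mpow_eq_specFun hA.1]
  exact specFun_posSemidef hA.1 (fun i => Real.rpow_nonneg (hA.eigenvalues_nonneg i) t)

lemma mpow_mul_mpow {A : Matrix n n ℂ} (hA : A.PosSemidef) {a b : ℝ}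
    (ha : a ≠ 0) (hb : b ≠ 0) (hab : a + b ≠ 0) :
    mpow A a * mpow A b = mpow A (a + b) := by
  rw [mpow_eq_specFun hA.1, mpow_eq_specFun hA.1, mpow_eq_specFun hA.1,
    specFun_mul_specFun hA.1]
  apply specFun_congr
  intro i
  rcases eq_or_lt_of_le (hA.eigenvalues_nonneg i) with h | h
  · rw [← h, Real.zero_rpow ha, Real.zero_rpow hab, zero_mul]
  · rw [← Real.rpow_add h]

lemma mpow_mulVec_zero {A : Matrix n n ℂ} (hA : A.PosSemidef) {t : ℝ} (ht : t ≠ 0)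
    {u : n → ℂ} (hu : A *ᵥ u = 0) : mpow A t *ᵥ u = 0 := by
  rw [mpow_eq_specFun hA.1]
  exact specFun_mulVec_zero hA.1 (by simp [Real.zero_rpow ht]) hu

open MeasureTheory in
lemma inv_kernel_integrableOn {p : ℝ} (hp0 : 0 < p) (hp1 : p < 1) {y : ℝ} (hy : 0 < y) :
    IntegrableOn (fun s : ℝ => (y + s)⁻¹ * s ^ (p-1)) (Set.Ioi 0) := by
  have h := (kernel_integrableOn hp0 hp1 hy.le).const_mul y⁻¹
  apply (integrableOn_congr_fun ?_ measurableSet_Ioi).mpr h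
  intro s hs
  field_simp

open MeasureTheory in
lemma neg_rpow_rep {p : ℝ} (hp0 : 0 < p) (hp1 : p < 1) {y : ℝ} (hy : 0 < y) :
    y ^ (p - 1) * Jc p = ∫ s in Set.Ioi (0:ℝ), (y + s)⁻¹ * s ^ (p-1) := by
  have h1 := rpow_rep hp0 hp1 hy.le
  have h2 : ∀ s ∈ Set.Ioi (0:ℝ), (y + s)⁻¹ * s ^ (p-1) = y⁻¹ * (y / (y + s) * s ^ (p-1)) := by
    intro s hs
    field_simp
  rw [setIntegral_congr_fun measurableSet_Ioi h2, integral_const_mul, ← h1]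
  rw [show y ^ (p-1) = y⁻¹ * y ^ p from ?_]
  · ring
  · rw [← Real.rpow_neg_one y, ← Real.rpow_add hy]
    ring_nf

open MeasureTheory in
lemma qf_negpow_kernel_sum {A : Matrix n n ℂ} (hA : A.PosSemidef) (w : n → ℂ) (p ε : ℝ) :
    ∀ s ∈ Set.Ioi (0:ℝ),
      (star w ⬝ᵥ specFun hA.1 (fun x => (x + (ε + s))⁻¹) *ᵥ w).re * s ^ (p-1) =
      ∑ i, ((hA.1.eigenvalues i + ε + s)⁻¹ * s ^ (p-1)) * Complex.normSq (coords hA.1 w i) := by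
  intro s _
  rw [qf_specFun_re, Finset.sum_mul]
  congr 1; ext i
  rw [add_assoc]
  ring

open MeasureTheory in
lemma qf_negpow_integral {A : Matrix n n ℂ} (hA : A.PosSemidef) (w : n → ℂ) {t ε : ℝ}
    (ht0 : 0 < t) (ht1 : t < 1) (hε : 0 < ε) :
    (star w ⬝ᵥ specFun hA.1 (fun x => (x + ε) ^ (-t)) *ᵥ w).re = (Jc (1-t))⁻¹ *
      ∫ s in Set.Ioi (0:ℝ),
        (star w ⬝ᵥ specFun hA.1 (fun x => (x + (ε + s))⁻¹) *ᵥ w).re * s ^ ((1-t)-1) := by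
  set p := 1 - t with hp
  have hp0 : 0 < p := by rw [hp]; linarith
  have hp1 : p < 1 := by rw [hp]; linarith
  have hint : ∀ i : n, IntegrableOn
      (fun s : ℝ => ((hA.1.eigenvalues i + ε + s)⁻¹ * s ^ (p-1)) *
        Complex.normSq (coords hA.1 w i)) (Set.Ioi 0) :=
    fun i => (inv_kernel_integrableOn hp0 hp1
      (add_pos_of_nonneg_of_pos (hA.eigenvalues_nonneg i) hε)).mul_const _
  rw [setIntegral_congr_fun measurableSet_Ioi (qf_negpow_kernel_sum hA w p ε),
    integral_finset_sum _ (fun i _ => hint i), qf_specFun_re]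
  have hterm : ∀ i, (∫ s in Set.Ioi (0:ℝ),
      ((hA.1.eigenvalues i + ε + s)⁻¹ * s ^ (p-1)) * Complex.normSq (coords hA.1 w i))
      = ((hA.1.eigenvalues i + ε) ^ (p-1) * Jc p) * Complex.normSq (coords hA.1 w i) := by
    intro i
    rw [integral_mul_const, ← neg_rpow_rep hp0 hp1
      (add_pos_of_nonneg_of_pos (hA.eigenvalues_nonneg i) hε)]
  rw [Finset.sum_congr rfl (fun i _ => hterm i), Finset.mul_sum]
  congr 1; ext i
  have hJ := (Jc_pos hp0 hp1).ne'
  rw [show p - 1 = -t by rw [hp]; ring]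
  field_simp

open MeasureTheory in
lemma qf_negpow_kernel_integrableOn {A : Matrix n n ℂ} (hA : A.PosSemidef) (w : n → ℂ)
    {p ε : ℝ} (hp0 : 0 < p) (hp1 : p < 1) (hε : 0 < ε) :
    IntegrableOn (fun s : ℝ =>
      (star w ⬝ᵥ specFun hA.1 (fun x => (x + (ε + s))⁻¹) *ᵥ w).re * s ^ (p-1))
      (Set.Ioi 0) := by
  apply (integrableOn_congr_fun (qf_negpow_kernel_sum hA w p ε) measurableSet_Ioi).mpr
  apply integrable_finset_sum
  intro i _
  exact (inv_kernel_integrableOn hp0 hp1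
    (add_pos_of_nonneg_of_pos (hA.eigenvalues_nonneg i) hε)).mul_const _

lemma specFun_reginv_eq {A : Matrix n n ℂ} (hA : A.PosSemidef) {c : ℝ} (hc : 0 < c) :
    specFun hA.1 (fun x => (x + c)⁻¹) = (A + (c:ℂ) • 1)⁻¹ :=
  (specFun_addScalar_inv hA.1 (fun i => (eig_add_pos hA hc i).ne')).symm

lemma qf_reginv_anti {A B : Matrix n n ℂ} (hA : A.PosSemidef) (hB : B.PosSemidef)
    (hAB : (B - A).PosSemidef) {c : ℝ} (hc : 0 < c) (w : n → ℂ) :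
    (star w ⬝ᵥ specFun hB.1 (fun x => (x + c)⁻¹) *ᵥ w).re ≤
      (star w ⬝ᵥ specFun hA.1 (fun x => (x + c)⁻¹) *ᵥ w).re := by
  rw [specFun_reginv_eq hA hc, specFun_reginv_eq hB hc]
  exact qf_inv_anti (addScalar_posDef hA hc) (addScalar_posDef hB hc)
    (by rw [show B + (c:ℂ)•1 - (A + (c:ℂ)•1) = B - A by abel]; exact hAB) w

/-- Monotonicity of the regularized negative power. -/
lemma qf_regpow_anti {A B : Matrix n n ℂ} (hA : A.PosSemidef) (hB : B.PosSemidef)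
    (hAB : (B - A).PosSemidef) {t ε : ℝ} (ht0 : 0 < t) (ht1 : t ≤ 1) (hε : 0 < ε) (w : n → ℂ) :
    (star w ⬝ᵥ specFun hB.1 (fun x => (x + ε) ^ (-t)) *ᵥ w).re ≤
      (star w ⬝ᵥ specFun hA.1 (fun x => (x + ε) ^ (-t)) *ᵥ w).re := by
  rcases eq_or_lt_of_le ht1 with h1 | h1
  · have hco : ∀ (C : Matrix n n ℂ) (hC : C.PosSemidef),
        specFun hC.1 (fun x => (x + ε) ^ (-t)) = specFun hC.1 (fun x => (x + ε)⁻¹) := by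
      intro C hC
      apply specFun_congr
      intro i
      rw [h1, Real.rpow_neg_one]
    rw [hco A hA, hco B hB]
    exact qf_reginv_anti hA hB hAB hε w
  · have hp0 : 0 < 1 - t := by linarith
    have hp1 : 1 - t < 1 := by linarith
    rw [qf_negpow_integral hA w ht0 h1 hε, qf_negpow_integral hB w ht0 h1 hε]
    apply mul_le_mul_of_nonneg_left ?_ (inv_nonneg.mpr (Jc_pos hp0 hp1).le)
    apply MeasureTheory.setIntegral_mono_on
      (qf_negpow_kernel_integrableOn hB w hp0 hp1 hε)
      (qf_negpow_kernel_integrableOn hA w hp0 hp1 hε) measurableSet_Ioi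
    intro s hs
    have hss : (0:ℝ) < s := hs
    have := qf_reginv_anti hA hB hAB (by linarith : (0:ℝ) < ε + s) w
    exact mul_le_mul_of_nonneg_right this (Real.rpow_nonneg hss.le _)


lemma coords_eq_dotProduct {A : Matrix n n ℂ} (hA : A.IsHermitian) (w : n → ℂ) (i : n) :
    coords hA w i = star (fun k => (hA.eigenvectorUnitary : Matrix n n ℂ) k i) ⬝ᵥ w := by
  simp [coords, Matrix.mulVec, dotProduct, Matrix.star_apply, Pi.star_apply]

lemma eigenvector_mulVec_zero {A : Matrix n n ℂ} (hA : A.IsHermitian) {i : n}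
    (hi : hA.eigenvalues i = 0) :
    A *ᵥ (fun k => (hA.eigenvectorUnitary : Matrix n n ℂ) k i) = 0 := by
  have h := hA.mulVec_eigenvectorBasis i
  rw [hi, zero_smul] at h
  have hfun : (fun k => (hA.eigenvectorUnitary : Matrix n n ℂ) k i)
      = (hA.eigenvectorBasis i).ofLp := by
    ext k
    rw [Matrix.IsHermitian.eigenvectorUnitary_apply]
  rw [hfun, h]

lemma coords_vanish {σ : Matrix n n ℂ} (hσ : σ.PosSemidef) (w : n → ℂ)
    (hw : ∀ u, σ *ᵥ u = 0 → star u ⬝ᵥ w = 0) {i : n} (hi : hσ.1.eigenvalues i = 0) :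
    coords hσ.1 w i = 0 := by
  rw [coords_eq_dotProduct]
  exact hw _ (eigenvector_mulVec_zero hσ.1 hi)

open Filter in
lemma tendsto_reg_qf {σ : Matrix n n ℂ} (hσ : σ.PosSemidef) {t : ℝ} (ht : 0 < t) (w : n → ℂ)
    (hvanish : ∀ i, hσ.1.eigenvalues i = 0 → coords hσ.1 w i = 0) :
    Tendsto (fun ε : ℝ => (star w ⬝ᵥ specFun hσ.1 (fun x => (x + ε) ^ (-t)) *ᵥ w).re)
      (nhdsWithin 0 (Set.Ioi 0)) (nhds ((star w ⬝ᵥ mpow σ (-t) *ᵥ w).re)) := by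
  have hfun : (fun ε : ℝ => (star w ⬝ᵥ specFun hσ.1 (fun x => (x + ε) ^ (-t)) *ᵥ w).re)
      = fun ε : ℝ => ∑ i, (hσ.1.eigenvalues i + ε) ^ (-t) * Complex.normSq (coords hσ.1 w i) :=
    funext fun ε => qf_specFun_re hσ.1 _ w
  rw [hfun, mpow_eq_specFun hσ.1, qf_specFun_re hσ.1 _ w]
  apply tendsto_finset_sum
  intro i _
  rcases eq_or_lt_of_le (hσ.eigenvalues_nonneg i) with h | h
  · have hc : Complex.normSq (coords hσ.1 w i) = 0 := by rw [hvanish i h.symm]; simp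
    rw [hc]
    simp only [mul_zero]
    exact tendsto_const_nhds
  · apply Filter.Tendsto.mul_const
    have h1 : Tendsto (fun ε : ℝ => hσ.1.eigenvalues i + ε) (nhdsWithin 0 (Set.Ioi 0))
        (nhds (hσ.1.eigenvalues i)) := by
      have h0 : Tendsto (fun ε : ℝ => hσ.1.eigenvalues i + ε) (nhds 0)
          (nhds (hσ.1.eigenvalues i + 0)) := (continuous_const.add continuous_id).tendsto 0
      rw [add_zero] at h0
      exact h0.mono_left nhdsWithin_le_nhds
    have h2 := (Real.continuousAt_rpow_const (hσ.1.eigenvalues i) (-t) (Or.inl h.ne')).tendsto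
    exact h2.comp h1

lemma qf_npow_anti {σ₁ σ₂ : Matrix n n ℂ} (h1 : σ₁.PosSemidef) (h2 : σ₂.PosSemidef)
    (h12 : (σ₂ - σ₁).PosSemidef) {t : ℝ} (ht0 : 0 < t) (ht1 : t ≤ 1) (w : n → ℂ)
    (hw : ∀ u, σ₁ *ᵥ u = 0 → star u ⬝ᵥ w = 0) :
    (star w ⬝ᵥ mpow σ₂ (-t) *ᵥ w).re ≤ (star w ⬝ᵥ mpow σ₁ (-t) *ᵥ w).re := by
  have hker : ∀ u, σ₂ *ᵥ u = 0 → σ₁ *ᵥ u = 0 := by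
    intro u hu
    apply (h1.dotProduct_mulVec_zero_iff u).mp
    have e2 : star u ⬝ᵥ σ₂ *ᵥ u = 0 := by rw [hu, dotProduct_zero]
    have hle := h12.dotProduct_mulVec_nonneg u
    rw [Matrix.sub_mulVec, dotProduct_sub, e2, zero_sub] at hle
    exact le_antisymm (neg_nonneg.mp hle) (h1.dotProduct_mulVec_nonneg u)
  have hw2 : ∀ u, σ₂ *ᵥ u = 0 → star u ⬝ᵥ w = 0 := fun u hu => hw u (hker u hu)
  have hT1 := tendsto_reg_qf h1 ht0 w (fun i hi => coords_vanish h1 w hw hi)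
  have hT2 := tendsto_reg_qf h2 ht0 w (fun i hi => coords_vanish h2 w hw2 hi)
  apply le_of_tendsto_of_tendsto hT2 hT1
  filter_upwards [eventually_mem_nhdsWithin] with ε hε
  exact qf_regpow_anti h1 h2 h12 ht0 ht1 (Set.mem_Ioi.mp hε) w


section Weyl
open Module

/-- Subspace of vectors supported (in coordinates) on `S`. -/
noncomputable def coordSub (S : Finset n) : Submodule ℂ (n → ℂ) :=
  LinearMap.ker (LinearMap.funLeft ℂ ℂ (fun i : {x : n // x ∈ Sᶜ} => (i : n)))

lemma mem_coordSub {S : Finset n} {x : n → ℂ} :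
    x ∈ coordSub S ↔ ∀ i ∉ S, x i = 0 := by
  simp only [coordSub, LinearMap.mem_ker]
  constructor
  · intro h i hi
    exact congrFun h ⟨i, Finset.mem_compl.mpr hi⟩
  · intro h
    ext ⟨i, hi⟩
    exact h i (Finset.mem_compl.mp hi)

lemma finrank_coordSub (S : Finset n) : finrank ℂ (coordSub S) = S.card := by
  have hsurj : Function.Surjective
      (LinearMap.funLeft ℂ ℂ (fun i : {x : n // x ∈ Sᶜ} => (i : n))) :=
    LinearMap.funLeft_surjective_of_injective ℂ ℂ _ Subtype.coe_injective
  have h := LinearMap.finrank_range_add_finrank_ker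
    (LinearMap.funLeft ℂ ℂ (fun i : {x : n // x ∈ Sᶜ} => (i : n)))
  rw [LinearMap.range_eq_top.mpr hsurj, finrank_top, Module.finrank_fintype_fun_eq_card,
    Module.finrank_fintype_fun_eq_card, Fintype.card_coe] at h
  have hcard : (Sᶜ : Finset n).card = Fintype.card n - S.card := Finset.card_compl S
  have hle : S.card ≤ Fintype.card n := Finset.card_le_univ S
  rw [coordSub]
  omega

/-- Conjugation by the eigenvector unitary as a linear equivalence. -/
noncomputable def eigEquiv {A : Matrix n n ℂ} (hA : A.IsHermitian) : (n → ℂ) ≃ₗ[ℂ] (n → ℂ) :=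
  LinearEquiv.ofLinear
    (Matrix.mulVecLin (star (hA.eigenvectorUnitary : Matrix n n ℂ)))
    (Matrix.mulVecLin (hA.eigenvectorUnitary : Matrix n n ℂ))
    (by rw [← Matrix.mulVecLin_mul, star_mul_self_eigenvectorUnitary hA, Matrix.mulVecLin_one])
    (by rw [← Matrix.mulVecLin_mul, mul_star_self_eigenvectorUnitary hA, Matrix.mulVecLin_one])

/-- Span of the eigenvectors indexed by `S`. -/
noncomputable def eigSub {A : Matrix n n ℂ} (hA : A.IsHermitian) (S : Finset n) :
    Submodule ℂ (n → ℂ) :=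
  Submodule.comap ((eigEquiv hA : (n → ℂ) →ₗ[ℂ] (n → ℂ))) (coordSub S)

lemma mem_eigSub {A : Matrix n n ℂ} (hA : A.IsHermitian) {S : Finset n} {v : n → ℂ} :
    v ∈ eigSub hA S ↔ ∀ i ∉ S, coords hA v i = 0 := by
  rw [eigSub, Submodule.mem_comap, mem_coordSub]
  rfl

lemma finrank_eigSub {A : Matrix n n ℂ} (hA : A.IsHermitian) (S : Finset n) :
    finrank ℂ (eigSub hA S) = S.card := by
  rw [eigSub, Submodule.comap_equiv_eq_map_symm, LinearEquiv.finrank_map_eq, finrank_coordSub]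

lemma exists_ne_zero_mem_inf {V W : Submodule ℂ (n → ℂ)}
    (h : Fintype.card n < finrank ℂ V + finrank ℂ W) : ∃ v, v ≠ 0 ∧ v ∈ V ∧ v ∈ W := by
  have h1 := Submodule.finrank_sup_add_finrank_inf_eq V W
  have h2 : finrank ℂ (V ⊔ W : Submodule ℂ (n → ℂ)) ≤ Fintype.card n := by
    have := Submodule.finrank_le (V ⊔ W)
    rwa [Module.finrank_fintype_fun_eq_card] at this
  have h3 : 0 < finrank ℂ (V ⊓ W : Submodule ℂ (n → ℂ)) := by omega
  have h4 : (V ⊓ W : Submodule ℂ (n → ℂ)) ≠ ⊥ := by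
    intro hbot
    rw [hbot, finrank_bot] at h3
    omega
  obtain ⟨v, hv, hv0⟩ := (Submodule.ne_bot_iff _).mp h4
  exact ⟨v, hv0, hv.1, hv.2⟩

lemma qf_re_eq_sum {A : Matrix n n ℂ} (hA : A.IsHermitian) (v : n → ℂ) :
    (star v ⬝ᵥ A *ᵥ v).re = ∑ i, hA.eigenvalues i * Complex.normSq (coords hA v i) := by
  have h := qf_specFun_re hA (fun x => x) v
  rw [specFun_id hA] at h
  exact h

lemma qf_le_of_eigSub {A : Matrix n n ℂ} (hA : A.IsHermitian) {S : Finset n} {c : ℝ}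
    (hS : ∀ i ∈ S, hA.eigenvalues i ≤ c) {v : n → ℂ} (hv : v ∈ eigSub hA S) :
    (star v ⬝ᵥ A *ᵥ v).re ≤ c * ∑ i, Complex.normSq (v i) := by
  rw [qf_re_eq_sum hA v, ← sum_normSq_coords hA v, Finset.mul_sum]
  apply Finset.sum_le_sum
  intro i _
  by_cases hi : i ∈ S
  · exact mul_le_mul_of_nonneg_right (hS i hi) (Complex.normSq_nonneg _)
  · rw [(mem_eigSub hA).mp hv i hi]
    simp

lemma qf_ge_of_eigSub {A : Matrix n n ℂ} (hA : A.IsHermitian) {S : Finset n} {c : ℝ}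
    (hS : ∀ i ∈ S, c ≤ hA.eigenvalues i) {v : n → ℂ} (hv : v ∈ eigSub hA S) :
    c * ∑ i, Complex.normSq (v i) ≤ (star v ⬝ᵥ A *ᵥ v).re := by
  rw [qf_re_eq_sum hA v, ← sum_normSq_coords hA v, Finset.mul_sum]
  apply Finset.sum_le_sum
  intro i _
  by_cases hi : i ∈ S
  · exact mul_le_mul_of_nonneg_right (hS i hi) (Complex.normSq_nonneg _)
  · rw [(mem_eigSub hA).mp hv i hi]
    simp

lemma sum_normSq_pos {v : n → ℂ} (hv : v ≠ 0) : 0 < ∑ i, Complex.normSq (v i) := by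
  have : ∃ i, v i ≠ 0 := by
    by_contra h
    push_neg at h
    exact hv (funext h)
  obtain ⟨i, hi⟩ := this
  apply Finset.sum_pos' (fun j _ => Complex.normSq_nonneg _)
  exact ⟨i, Finset.mem_univ i, Complex.normSq_pos.mpr hi⟩

end Weyl

lemma eig_sorted_le {N : ℕ} {A B : Matrix (Fin N) (Fin N) ℂ}
    (hA : A.IsHermitian) (hB : B.IsHermitian) (hAB : (B - A).PosSemidef) (k : Fin N) :
    hA.eigenvalues (Tuple.sort hA.eigenvalues k) ≤
      hB.eigenvalues (Tuple.sort hB.eigenvalues k) := by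
  set τA := Tuple.sort hA.eigenvalues with hτA
  set τB := Tuple.sort hB.eigenvalues with hτB
  set SA : Finset (Fin N) := (Finset.Ici k).image τA with hSA
  set SB : Finset (Fin N) := (Finset.Iic k).image τB with hSB
  have hcardA : SA.card = N - k := by
    rw [hSA, Finset.card_image_of_injective _ τA.injective, Fin.card_Ici]
  have hcardB : SB.card = k + 1 := by
    rw [hSB, Finset.card_image_of_injective _ τB.injective, Fin.card_Iic]
  obtain ⟨v, hv0, hvA, hvB⟩ := exists_ne_zero_mem_inf
    (V := eigSub hA SA) (W := eigSub hB SB) (by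
      rw [finrank_eigSub, finrank_eigSub, hcardA, hcardB, Fintype.card_fin]
      have := k.2
      omega)
  have hlA : ∀ i ∈ SA, hA.eigenvalues (τA k) ≤ hA.eigenvalues i := by
    intro i hi
    obtain ⟨j, hj, rfl⟩ := Finset.mem_image.mp hi
    exact Tuple.monotone_sort hA.eigenvalues (Finset.mem_Ici.mp hj)
  have hlB : ∀ i ∈ SB, hB.eigenvalues i ≤ hB.eigenvalues (τB k) := by
    intro i hi
    obtain ⟨j, hj, rfl⟩ := Finset.mem_image.mp hi
    exact Tuple.monotone_sort hB.eigenvalues (Finset.mem_Iic.mp hj)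
  have h1 := qf_ge_of_eigSub hA hlA hvA
  have h2 := qf_le_of_eigSub hB hlB hvB
  have h3 := re_qf_le_of_sub_posSemidef hAB v
  have h4 := sum_normSq_pos hv0
  have := h1.trans (h3.trans h2)
  exact le_of_mul_le_mul_right (by linarith [this]) h4

lemma trace_mpow_mono {N : ℕ} {A B : Matrix (Fin N) (Fin N) ℂ}
    (hA : A.PosSemidef) (hB : B.PosSemidef) (hAB : (B - A).PosSemidef) {z : ℝ} (hz : 0 ≤ z) :
    ((mpow A z).trace).re ≤ ((mpow B z).trace).re := by
  rw [mpow_eq_specFun hA.1, trace_specFun, mpow_eq_specFun hB.1, trace_specFun,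
    Complex.re_sum, Complex.re_sum]
  simp only [Complex.ofReal_re]
  rw [← Equiv.sum_comp (Tuple.sort hA.1.eigenvalues) (fun i => hA.1.eigenvalues i ^ z),
    ← Equiv.sum_comp (Tuple.sort hB.1.eigenvalues) (fun i => hB.1.eigenvalues i ^ z)]
  apply Finset.sum_le_sum
  intro k _
  exact Real.rpow_le_rpow (hA.eigenvalues_nonneg _) (eig_sorted_le hA.1 hB.1 hAB k) hz


open Polynomial in
lemma eval_charpoly (M : Matrix n n ℂ) (x : ℂ) :
    (M.charpoly).eval x = (x • (1 : Matrix n n ℂ) - M).det := by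
  have h := RingHom.map_det (Polynomial.evalRingHom x) (Matrix.charmatrix M)
  rw [Matrix.charpoly]
  rw [show (Matrix.charmatrix M).det.eval x
      = (Polynomial.evalRingHom x) (Matrix.charmatrix M).det from rfl, h]
  congr 1
  ext i j
  rcases eq_or_ne i j with rfl | hij
  · simp [Matrix.charmatrix_apply_eq, Matrix.one_apply]
  · simp [Matrix.charmatrix_apply_ne _ _ _ hij, Matrix.one_apply, hij]

open Polynomial in
lemma charpoly_mul_comm (A B : Matrix n n ℂ) : (A * B).charpoly = (B * A).charpoly := by
  apply Polynomial.funext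
  intro x
  rw [eval_charpoly, eval_charpoly]
  rcases eq_or_ne x 0 with rfl | hx
  · rw [zero_smul, zero_sub, zero_sub, Matrix.det_neg, Matrix.det_neg, Matrix.det_mul,
      Matrix.det_mul, mul_comm B.det A.det]
  · have key : ∀ C D : Matrix n n ℂ,
        x • (1 : Matrix n n ℂ) - C * D = x • (1 - (x⁻¹ • C) * D) := by
      intro C D
      rw [smul_sub, Matrix.smul_mul, smul_smul, mul_inv_cancel₀ hx, one_smul]
    rw [key A B, key B A, Matrix.det_smul, Matrix.det_smul]
    congr 1
    have h1 := Matrix.det_one_add_mul_comm (-(x⁻¹ • A)) B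
    rw [neg_mul, mul_neg, ← sub_eq_add_neg, ← sub_eq_add_neg] at h1
    rw [h1]
    congr 2
    rw [Matrix.mul_smul, Matrix.smul_mul]


open Polynomial in
lemma isHermitian_charpoly_prod {M : Matrix n n ℂ} (hM : M.IsHermitian) :
    M.charpoly = (Multiset.map (fun i => X - C ((hM.eigenvalues i : ℝ) : ℂ))
      Finset.univ.val).prod := by
  apply Polynomial.funext
  intro x
  rw [eval_charpoly, Polynomial.eval_multiset_prod, Multiset.map_map]
  have h1 : x • (1 : Matrix n n ℂ) - M =
      (hM.eigenvectorUnitary : Matrix n n ℂ) *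
        Matrix.diagonal (fun i => x - ((hM.eigenvalues i : ℝ) : ℂ)) *
        star (hM.eigenvectorUnitary : Matrix n n ℂ) := by
    have e1 : x • (1 : Matrix n n ℂ) = (hM.eigenvectorUnitary : Matrix n n ℂ) *
        Matrix.diagonal (fun _ => x) * star (hM.eigenvectorUnitary : Matrix n n ℂ) := by
      have : Matrix.diagonal (fun _ : n => x) = x • 1 := by
        ext i j
        by_cases hij : i = j <;> simp [Matrix.diagonal, Matrix.one_apply, hij]
      rw [this]
      rw [Matrix.mul_smul, Matrix.smul_mul, mul_one, mul_star_self_eigenvectorUnitary hM]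
    have hsub : ((hM.eigenvectorUnitary : Matrix n n ℂ) * Matrix.diagonal (fun _ : n => x) *
          star (hM.eigenvectorUnitary : Matrix n n ℂ)) -
        ((hM.eigenvectorUnitary : Matrix n n ℂ) *
          Matrix.diagonal (fun i => ((hM.eigenvalues i : ℝ) : ℂ)) *
          star (hM.eigenvectorUnitary : Matrix n n ℂ)) =
        (hM.eigenvectorUnitary : Matrix n n ℂ) *
          Matrix.diagonal (fun i => x - ((hM.eigenvalues i : ℝ) : ℂ)) *
          star (hM.eigenvectorUnitary : Matrix n n ℂ) := by
      rw [← Matrix.sub_mul, ← Matrix.mul_sub, Matrix.diagonal_sub]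
    rw [← hsub, e1]
    congr 1
    exact (specFun_id hM).symm
  rw [h1, Matrix.det_mul, Matrix.det_mul, mul_comm, ← mul_assoc, ← Matrix.det_mul,
    star_mul_self_eigenvectorUnitary hM, Matrix.det_one, one_mul, Matrix.det_diagonal]
  rw [Finset.prod_eq_multiset_prod]
  congr 1
  apply Multiset.map_congr rfl
  intro i _
  simp

lemma eigenvalues_multiset_eq {M₁ M₂ : Matrix n n ℂ} (h1 : M₁.IsHermitian)
    (h2 : M₂.IsHermitian) (hcp : M₁.charpoly = M₂.charpoly) :
    Multiset.map (fun i => ((h1.eigenvalues i : ℝ) : ℂ)) Finset.univ.val =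
      Multiset.map (fun i => ((h2.eigenvalues i : ℝ) : ℂ)) Finset.univ.val := by
  have e1 : M₁.charpoly.roots
      = Multiset.map (fun i => ((h1.eigenvalues i : ℝ) : ℂ)) Finset.univ.val := by
    rw [isHermitian_charpoly_prod h1,
      show (fun i => Polynomial.X - Polynomial.C ((h1.eigenvalues i : ℝ) : ℂ))
        = (fun a => Polynomial.X - Polynomial.C a) ∘ (fun i => ((h1.eigenvalues i : ℝ) : ℂ))
        from rfl,
      ← Multiset.map_map, Polynomial.roots_multiset_prod_X_sub_C]
  have e2 : M₂.charpoly.roots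
      = Multiset.map (fun i => ((h2.eigenvalues i : ℝ) : ℂ)) Finset.univ.val := by
    rw [isHermitian_charpoly_prod h2,
      show (fun i => Polynomial.X - Polynomial.C ((h2.eigenvalues i : ℝ) : ℂ))
        = (fun a => Polynomial.X - Polynomial.C a) ∘ (fun i => ((h2.eigenvalues i : ℝ) : ℂ))
        from rfl,
      ← Multiset.map_map, Polynomial.roots_multiset_prod_X_sub_C]
  rw [← e1, ← e2, hcp]

lemma trace_mpow_eq_of_charpoly {M₁ M₂ : Matrix n n ℂ} (h1 : M₁.PosSemidef)
    (h2 : M₂.PosSemidef) (hcp : M₁.charpoly = M₂.charpoly) (z : ℝ) :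
    (mpow M₁ z).trace = (mpow M₂ z).trace := by
  rw [mpow_eq_specFun h1.1, trace_specFun, mpow_eq_specFun h2.1, trace_specFun]
  have hms := eigenvalues_multiset_eq h1.1 h2.1 hcp
  have hmap := congrArg (fun s => (Multiset.map
    (fun c : ℂ => ((c.re ^ z : ℝ) : ℂ)) s).sum) hms
  simp only [Multiset.map_map, Function.comp_def, Complex.ofReal_re] at hmap
  rw [Finset.sum_eq_multiset_sum, Finset.sum_eq_multiset_sum]
  exact hmap

lemma trace_mpow_mul_comm (X : Matrix n n ℂ) (z : ℝ) :
    (mpow (X * Xᴴ) z).trace = (mpow (Xᴴ * X) z).trace :=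
  trace_mpow_eq_of_charpoly (Matrix.posSemidef_self_mul_conjTranspose X)
    (Matrix.posSemidef_conjTranspose_mul_self X) (charpoly_mul_comm X Xᴴ) z


lemma qf_sandwich {R M : Matrix n n ℂ} (hR : R.IsHermitian) (v : n → ℂ) :
    star v ⬝ᵥ ((R * M * R) *ᵥ v) = star (R *ᵥ v) ⬝ᵥ (M *ᵥ (R *ᵥ v)) := by
  rw [← Matrix.mulVec_mulVec, ← Matrix.mulVec_mulVec, Matrix.dotProduct_mulVec,
    show star v ᵥ* R = star (R *ᵥ v) from by rw [Matrix.star_mulVec, hR.eq]]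

lemma sandwich_isHermitian {R M : Matrix n n ℂ} (hR : R.IsHermitian) (hM : M.IsHermitian) :
    (R * M * R).IsHermitian := by
  have h2 := Matrix.isHermitian_mul_mul_conjTranspose Rᴴ hM
  rwa [Matrix.conjTranspose_conjTranspose, hR.eq] at h2

lemma sandwich_posSemidef {R M : Matrix n n ℂ} (hR : R.IsHermitian) (hM : M.PosSemidef) :
    (R * M * R).PosSemidef := by
  have := hM.conjTranspose_mul_mul_same R
  rwa [hR.eq] at this

end Renyi

open Renyi in
/-- Order relations for `α > 1`:
(a) if `z ≥ α`, `ρ₁ ≤ ρ₂` and `supp ρ₂ ⊆ supp σ`, then `Q_{α,z}(ρ₁‖σ) ≤ Q_{α,z}(ρ₂‖σ)`;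
(b) if `z ≥ α − 1`, `σ₁ ≤ σ₂` and `supp ρ ⊆ supp σ₁`, then `Q_{α,z}(ρ‖σ₁) ≥ Q_{α,z}(ρ‖σ₂)`. -/
theorem Qaz_order_relations_alpha_gt_one (n : ℕ) (α z : ℝ) (hα : 1 < α) (hz : 0 < z)
    (ρ ρ₁ ρ₂ σ σ₁ σ₂ : Matrix (Fin n) (Fin n) ℂ)
    (hρ : ρ.PosSemidef) (hρ₁ : ρ₁.PosSemidef) (hρ₂ : ρ₂.PosSemidef)
    (hσ : σ.PosSemidef) (hσ₁ : σ₁.PosSemidef) (hσ₂ : σ₂.PosSemidef) :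
    (α ≤ z → (ρ₂ - ρ₁).PosSemidef →
      (∀ v : Fin n → ℂ, σ *ᵥ v = 0 → ρ₂ *ᵥ v = 0) →
      Qaz α z ρ₁ σ ≤ Qaz α z ρ₂ σ) ∧
    (α - 1 ≤ z → (σ₂ - σ₁).PosSemidef →
      (∀ v : Fin n → ℂ, σ₁ *ᵥ v = 0 → ρ *ᵥ v = 0) →
      Qaz α z ρ σ₂ ≤ Qaz α z ρ σ₁) := by
  constructor
  · -- part (a)
    intro hza hd _
    set e := (1 - α) / (2 * z) with he
    set p := α / z with hp
    have hp0 : 0 < p := div_pos (by linarith) hz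
    have hp1 : p ≤ 1 := (div_le_one hz).mpr hza
    set C := mpow σ e with hC
    have hCh : C.IsHermitian := mpow_isHermitian σ e
    have hM1 : (C * mpow ρ₁ p * C).PosSemidef :=
      sandwich_posSemidef hCh (mpow_posSemidef hρ₁ p)
    have hM2 : (C * mpow ρ₂ p * C).PosSemidef :=
      sandwich_posSemidef hCh (mpow_posSemidef hρ₂ p)
    have hLH := lowner_heinz hρ₁ hρ₂ hd hp0 hp1
    have hdm : (C * mpow ρ₂ p * C - C * mpow ρ₁ p * C).PosSemidef := by
      have := sandwich_posSemidef hCh hLH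
      rwa [Matrix.mul_sub, Matrix.sub_mul] at this
    exact trace_mpow_mono hM1 hM2 hdm hz.le
  · -- part (b)
    intro hz1 hd hsupp
    set e := (1 - α) / (2 * z) with he
    set p := α / z with hp
    set q := α / (2 * z) with hq
    set t := (α - 1) / z with ht
    have hq0 : q ≠ 0 := ne_of_gt (div_pos (by linarith) (by linarith))
    have he0 : e ≠ 0 := by
      rw [he]
      apply ne_of_lt
      apply div_neg_of_neg_of_pos (by linarith) (by linarith)
    have ht0 : 0 < t := div_pos (by linarith) hz
    have ht1 : t ≤ 1 := by
      rw [ht, div_le_one hz]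
      linarith
    have hqq : q + q = p := by rw [hq, hp]; field_simp; ring
    have hee : e + e = -t := by rw [he, ht]; field_simp; ring
    set R := mpow ρ q with hR
    have hRh : R.IsHermitian := mpow_isHermitian ρ q
    have hRR : R * R = mpow ρ p := by
      rw [hR, mpow_mul_mpow hρ hq0 hq0 (by rw [hqq]; exact ne_of_gt (div_pos (by linarith) hz)),
        hqq]
    have hCC : ∀ (τ : Matrix (Fin n) (Fin n) ℂ), τ.PosSemidef →
        mpow τ e * mpow τ e = mpow τ (-t) := by
      intro τ hτ
      rw [mpow_mul_mpow hτ he0 he0 (by rw [hee]; exact ne_of_lt (neg_neg_iff_pos.mpr ht0)), hee]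
    -- rewrite Qaz via the flip
    have hQazEq : ∀ (τ : Matrix (Fin n) (Fin n) ℂ), τ.PosSemidef →
        Qaz α z ρ τ = ((mpow (R * mpow τ (-t) * R) z).trace).re := by
      intro τ hτ
      have hXXh : (mpow τ e * R) * (mpow τ e * R)ᴴ = mpow τ e * mpow ρ p * mpow τ e := by
        rw [Matrix.conjTranspose_mul, hRh.eq, (mpow_isHermitian τ e).eq]
        rw [show mpow τ e * R * (R * mpow τ e) = mpow τ e * (R * R) * mpow τ e by
          noncomm_ring]
        rw [hRR]
      have hXhX : (mpow τ e * R)ᴴ * (mpow τ e * R) = R * mpow τ (-t) * R := by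
        rw [Matrix.conjTranspose_mul, hRh.eq, (mpow_isHermitian τ e).eq]
        rw [show R * mpow τ e * (mpow τ e * R) = R * (mpow τ e * mpow τ e) * R by
          noncomm_ring]
        rw [hCC τ hτ]
      have hflip := trace_mpow_mul_comm (mpow τ e * R) z
      rw [hXXh, hXhX] at hflip
      rw [Qaz]
      rw [← he, ← hp]
      rw [hflip]
    rw [hQazEq σ₁ hσ₁, hQazEq σ₂ hσ₂]
    -- N₂ ≤ N₁
    have hN1 : (R * mpow σ₁ (-t) * R).PosSemidef :=
      sandwich_posSemidef hRh (mpow_posSemidef hσ₁ (-t))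
    have hN2 : (R * mpow σ₂ (-t) * R).PosSemidef :=
      sandwich_posSemidef hRh (mpow_posSemidef hσ₂ (-t))
    have hdm : (R * mpow σ₁ (-t) * R - R * mpow σ₂ (-t) * R).PosSemidef := by
      apply posSemidef_of_re (hN1.1.sub hN2.1)
      intro v
      rw [Matrix.sub_mulVec, dotProduct_sub, Complex.sub_re, sub_nonneg,
        qf_sandwich hRh v, qf_sandwich hRh v]
      apply qf_npow_anti hσ₁ hσ₂ hd ht0 ht1
      intro u hu
      have hρu : ρ *ᵥ u = 0 := hsupp u hu
      have hRu : R *ᵥ u = 0 := mpow_mulVec_zero hρ hq0 hρu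
      rw [Matrix.dotProduct_mulVec, show star u ᵥ* R = star (R *ᵥ u) from by
        rw [Matrix.star_mulVec, hRh.eq], hRu]
      simp
    exact trace_mpow_mono hN2 hN1 hdm hz.le
end
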